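/- arXiv:2510.18761 — 4 statements merged into one kernel-verified Lean document; each statement's English description precedes it below -/
import Mathlib

section
/- Let p, p', q be partially ordered patterns (POPs). If p and p' are shape-Wilf-equivalent, then the ordinal sums p⊕q and p'⊕q are shape-Wilf-equivalent. -/
/-- A partially ordered pattern (POP) of size `k`: a strict partial order on the
labels `{1, …, k}`, given by the relation `lt a b` meaning "`a` is strictly below `b`". -/
structure POP (k : ℕ) where
  lt : ℕ → ℕ → Prop
  supp : ∀ a b, lt a b → 1 ≤ a ∧ a ≤ k ∧ 1 ≤ b ∧ b ≤ k
  irrefl : ∀ a, ¬ lt a a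
  trans : ∀ a b c, lt a b → lt b c → lt a c

/-- An occurrence of the POP `p` in a permutation `π` of `{1, …, n}`:
indices `i₁ < ⋯ < i_k` with `π (i_a) < π (i_b)` whenever label `a` is strictly
below label `b` in `p` (everything 0-indexed internally). -/
def POP.Occurs {k : ℕ} (p : POP k) {n : ℕ} (π : Equiv.Perm (Fin n)) : Prop :=
  ∃ f : Fin k → Fin n, StrictMono f ∧
    ∀ a b : Fin k, p.lt ((a : ℕ) + 1) ((b : ℕ) + 1) → π (f a) < π (f b)

/-- The number of permutations of `{1, …, n}` avoiding the POP `p`. -/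
noncomputable def POP.avoiders {k : ℕ} (p : POP k) (n : ℕ) : ℕ :=
  Nat.card {π : Equiv.Perm (Fin n) // ¬ p.Occurs π}

/-- Wilf-equivalence of POPs: the same number of avoiding permutations for every `n ≥ 1`. -/
def WilfEquiv {k l : ℕ} (p : POP k) (q : POP l) : Prop :=
  ∀ n : ℕ, 1 ≤ n → p.avoiders n = q.avoiders n

/-- `σ` is a transversal of the Ferrers board with row lengths `lam`
(rows and columns 0-indexed): the 1 of column `j` lies in cell (row `σ j`, column `j`),
which must lie inside the board. -/
def IsTransversal {n : ℕ} (lam : Fin n → ℕ) (σ : Equiv.Perm (Fin n)) : Prop :=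
  ∀ j : Fin n, (j : ℕ) < lam (σ j)

/-- The transversal `σ` of the Ferrers board `lam` contains the POP `p`:
there are rows `r₁ < ⋯ < r_k`, columns `c₁ < ⋯ < c_k`, all cells `(r i, c j)` inside
the board, and a bijection `τ` with `σ (c j) = r (τ j)` and `τ a < τ b` whenever
`a` is strictly below `b` in `p`. -/
def POP.TContains {k : ℕ} (p : POP k) {n : ℕ} (lam : Fin n → ℕ)
    (σ : Equiv.Perm (Fin n)) : Prop :=
  ∃ (r c : Fin k → Fin n) (τ : Equiv.Perm (Fin k)),
    StrictMono r ∧ StrictMono c ∧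
    (∀ i j, (c j : ℕ) < lam (r i)) ∧
    (∀ j, σ (c j) = r (τ j)) ∧
    ∀ a b : Fin k, p.lt ((a : ℕ) + 1) ((b : ℕ) + 1) → τ a < τ b

/-- The number of transversals of the Ferrers board `lam` avoiding the POP `p`. -/
noncomputable def POP.shapeAvoiders {k : ℕ} (p : POP k) {n : ℕ} (lam : Fin n → ℕ) : ℕ :=
  Nat.card {σ : Equiv.Perm (Fin n) // IsTransversal lam σ ∧ ¬ p.TContains lam σ}

/-- Shape-Wilf-equivalence of POPs: the same number of avoiding transversals for
every Ferrers board (a weakly decreasing positive row-length function). -/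
def ShapeWilfEquiv {k l : ℕ} (p : POP k) (q : POP l) : Prop :=
  ∀ (n : ℕ) (lam : Fin n → ℕ), Antitone lam → (∀ i, 0 < lam i) →
    p.shapeAvoiders lam = q.shapeAvoiders lam

/-- The ordinal sum `p ⊕ q` of POPs: labels `1, …, k` ordered as in `p`, labels
`k+1, …, k+l` ordered as in `q` (shifted), and every label `≤ k` strictly below
every label `> k`. -/
def OrdSum {k l : ℕ} (p : POP k) (q : POP l) : POP (k + l) where
  lt a b := (a ≤ k ∧ b ≤ k ∧ p.lt a b) ∨ (k < a ∧ k < b ∧ q.lt (a - k) (b - k)) ∨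
    (1 ≤ a ∧ a ≤ k ∧ k < b ∧ b ≤ k + l)
  supp a b h := by
    rcases h with ⟨_, _, h⟩ | ⟨ha, hb, h⟩ | h
    · have := p.supp _ _ h; omega
    · have := q.supp _ _ h; omega
    · omega
  irrefl a h := by
    rcases h with ⟨_, _, h⟩ | ⟨_, _, h⟩ | h
    · exact p.irrefl _ h
    · exact q.irrefl _ h
    · omega
  trans a b c hab hbc := by
    rcases hab with ⟨ha, hb, h1⟩ | ⟨ha, hb, h1⟩ | h1 <;>
      rcases hbc with ⟨hb', hc, h2⟩ | ⟨hb', hc, h2⟩ | h2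
    · exact Or.inl ⟨ha, hc, p.trans _ _ _ h1 h2⟩
    · omega
    · have := p.supp _ _ h1; right; right; omega
    · omega
    · exact Or.inr (Or.inl ⟨ha, hc, q.trans _ _ _ h1 h2⟩)
    · omega
    · omega
    · have := q.supp _ _ h2; right; right; omega
    · omega

/-- The disjoint sum `p + q` of POPs: labels `1, …, k` ordered as in `p`, labels
`k+1, …, k+l` ordered as in `q` (shifted), and no relations between the two parts. -/
def DisjSum {k l : ℕ} (p : POP k) (q : POP l) : POP (k + l) where
  lt a b := (a ≤ k ∧ b ≤ k ∧ p.lt a b) ∨ (k < a ∧ k < b ∧ q.lt (a - k) (b - k))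
  supp a b h := by
    rcases h with ⟨_, _, h⟩ | ⟨ha, hb, h⟩
    · have := p.supp _ _ h; omega
    · have := q.supp _ _ h; omega
  irrefl a h := by
    rcases h with ⟨_, _, h⟩ | ⟨_, _, h⟩
    · exact p.irrefl _ h
    · exact q.irrefl _ h
  trans a b c hab hbc := by
    rcases hab with ⟨ha, hb, h1⟩ | ⟨ha, hb, h1⟩ <;>
      rcases hbc with ⟨hb', hc, h2⟩ | ⟨hb', hc, h2⟩
    · exact Or.inl ⟨ha, hc, p.trans _ _ _ h1 h2⟩
    · omega
    · omega
    · exact Or.inr ⟨ha, hc, q.trans _ _ _ h1 h2⟩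

/-- The label `i` is isolated in the POP `p`: it is a label of `p` incomparable
to every other label. -/
def POP.Isolated {k : ℕ} (p : POP k) (i : ℕ) : Prop :=
  1 ≤ i ∧ i ≤ k ∧ ∀ j, ¬ p.lt i j ∧ ¬ p.lt j i

/-- The restriction of the POP `p` to the initial labels `{1, …, m}`. -/
def POP.restrictInit {k : ℕ} (p : POP k) (m : ℕ) : POP m where
  lt a b := a ≤ m ∧ b ≤ m ∧ p.lt a b
  supp a b h := by have := p.supp _ _ h.2.2; omega
  irrefl a h := p.irrefl a h.2.2
  trans a b c h1 h2 := ⟨h1.1, h2.2.1, p.trans _ _ _ h1.2.2 h2.2.2⟩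

/-- The reverse `r(p)` of a POP of size `k`: `a` is strictly below `b` iff
`k+1-a` is strictly below `k+1-b` in `p`. -/
def POP.rev {k : ℕ} (p : POP k) : POP k where
  lt a b := a ≤ k ∧ b ≤ k ∧ p.lt (k + 1 - a) (k + 1 - b)
  supp a b h := by
    obtain ⟨h1, h2, h3⟩ := h
    have := p.supp _ _ h3; omega
  irrefl a h := p.irrefl _ h.2.2
  trans a b c h1 h2 := ⟨h1.1, h2.2.1, p.trans _ _ _ h1.2.2 h2.2.2⟩

section Machinery

attribute [local instance] Classical.propDecidable

variable {n l : ℕ} (lam : Fin n → ℕ) (q : POP l)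

/-- A witness of an occurrence of `q` strictly north-east of cell `(i,j)`, all of
whose 1s lie at cells satisfying `G`. -/
def WitVia (σ : Equiv.Perm (Fin n)) (i j : Fin n) (G : Fin n → Fin n → Prop) : Prop :=
  ∃ (R C : Fin l → Fin n) (π : Equiv.Perm (Fin l)),
    StrictMono R ∧ StrictMono C ∧ (∀ b, i < R b) ∧ (∀ b, j < C b) ∧
    (∀ a b, (C b : ℕ) < lam (R a)) ∧ (∀ b, σ (C b) = R (π b)) ∧
    (∀ a b : Fin l, q.lt ((a:ℕ)+1) ((b:ℕ)+1) → π a < π b) ∧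
    (∀ b, G (R (π b)) (C b))

/-- The cell `(i,j)` is blue for `σ`: it lies in the board and there is an
occurrence of `q` strictly north-east of it (inside the board). -/
def Blue (σ : Equiv.Perm (Fin n)) (i j : Fin n) : Prop :=
  (j:ℕ) < lam i ∧ WitVia lam q σ i j (fun _ _ => True)

variable {lam q}

lemma WitVia.monoG {σ i j} {G G' : Fin n → Fin n → Prop}
    (hG : ∀ a b, G a b → G' a b) (h : WitVia lam q σ i j G) : WitVia lam q σ i j G' := by
  obtain ⟨R, C, π, h1, h2, h3, h4, h5, h6, h7, h8⟩ := h
  exact ⟨R, C, π, h1, h2, h3, h4, h5, h6, h7, fun b => hG _ _ (h8 b)⟩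

lemma WitVia.monoPos {σ i j i' j'} {G : Fin n → Fin n → Prop}
    (hi : i' ≤ i) (hj : j' ≤ j) (h : WitVia lam q σ i j G) : WitVia lam q σ i' j' G := by
  obtain ⟨R, C, π, h1, h2, h3, h4, h5, h6, h7, h8⟩ := h
  exact ⟨R, C, π, h1, h2, fun b => lt_of_le_of_lt hi (h3 b),
    fun b => lt_of_le_of_lt hj (h4 b), h5, h6, h7, h8⟩

lemma Blue.mono (hA : Antitone lam) {σ : Equiv.Perm (Fin n)} {i j i' j' : Fin n}
    (hi : i' ≤ i) (hj : j' ≤ j) (h : Blue lam q σ i j) : Blue lam q σ i' j' := by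
  refine ⟨?_, h.2.monoPos hi hj⟩
  calc (j' : ℕ) ≤ (j : ℕ) := hj
  _ < lam i := h.1
  _ ≤ lam i' := hA hi

/-- Every blue cell has a witness all of whose 1s lie at non-blue cells. -/
lemma Blue.nbWit {σ : Equiv.Perm (Fin n)} {i j : Fin n} (h : Blue lam q σ i j) :
    WitVia lam q σ i j (fun a b => ¬ Blue lam q σ a b) := by
  suffices H : ∀ N (i j : Fin n), n - (i:ℕ) ≤ N → WitVia lam q σ i j (fun _ _ => True) →
      WitVia lam q σ i j (fun a b => ¬ Blue lam q σ a b) by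
    exact H n i j (by omega) h.2
  intro N
  induction N with
  | zero =>
    intro i j hN
    exact absurd i.isLt (by omega)
  | succ N ih =>
    intro i j hN hw
    obtain ⟨R, C, π, h1, h2, h3, h4, h5, h6, h7, -⟩ := hw
    by_cases hall : ∀ b, ¬ Blue lam q σ (R (π b)) (C b)
    · exact ⟨R, C, π, h1, h2, h3, h4, h5, h6, h7, hall⟩
    · push_neg at hall
      obtain ⟨b0, hb0⟩ := hall
      have hlt : i < R (π b0) := h3 _
      have h' := ih (R (π b0)) (C b0) (by have := hlt; omega) hb0.2
      exact h'.monoPos (le_of_lt hlt) (le_of_lt (h4 b0))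

end Machinery
section Rel

variable {n l : ℕ} {lam : Fin n → ℕ} {q : POP l}

/-- `σ'` is obtained from `σ` by keeping all 1s at non-blue cells and moving the
1s at blue cells to (possibly different) blue cells. -/
def REL (lam : Fin n → ℕ) (q : POP l) (σ σ' : Equiv.Perm (Fin n)) : Prop :=
  (∀ j, ¬ Blue lam q σ (σ j) j → σ' j = σ j) ∧
  (∀ j, Blue lam q σ (σ j) j → Blue lam q σ (σ' j) j)

lemma REL.refl (σ : Equiv.Perm (Fin n)) : REL lam q σ σ :=
  ⟨fun _ _ => rfl, fun _ h => h⟩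

/-- Core stability lemma: related permutations have the same blue cells. -/
lemma REL.blue_eq {σ σ' : Equiv.Perm (Fin n)} (h : REL lam q σ σ') :
    ∀ i j, Blue lam q σ' i j ↔ Blue lam q σ i j := by
  obtain ⟨h1, h2⟩ := h
  have fwd : ∀ i j, Blue lam q σ i j → Blue lam q σ' i j := by
    intro i j hb
    obtain ⟨R, C, π, w1, w2, w3, w4, w5, w6, w7, w8⟩ := hb.nbWit
    refine ⟨hb.1, R, C, π, w1, w2, w3, w4, w5, ?_, w7, fun _ => trivial⟩
    intro b
    rw [h1 (C b) (by rw [w6 b]; exact w8 b)]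
    exact w6 b
  intro i j
  refine ⟨fun hb => ?_, fwd i j⟩
  obtain ⟨R, C, π, w1, w2, w3, w4, w5, w6, w7, w8⟩ := hb.nbWit
  refine ⟨hb.1, R, C, π, w1, w2, w3, w4, w5, ?_, w7, fun _ => trivial⟩
  intro b
  have heq : σ' (C b) = σ (C b) := by
    by_cases hc : Blue lam q σ (σ (C b)) (C b)
    · exfalso
      have := fwd _ _ (h2 _ hc)
      rw [w6 b] at this
      exact w8 b this
    · exact h1 _ hc
  rw [← heq]; exact w6 b

lemma REL.inB_iff {σ σ' : Equiv.Perm (Fin n)} (h : REL lam q σ σ') (j : Fin n) :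
    Blue lam q σ' (σ' j) j ↔ Blue lam q σ (σ j) j := by
  constructor
  · intro hb
    by_contra hc
    rw [h.1 j hc, h.blue_eq] at hb
    exact hc hb
  · intro hb
    rw [h.blue_eq]
    exact h.2 j hb

lemma REL.symm {σ σ' : Equiv.Perm (Fin n)} (h : REL lam q σ σ') : REL lam q σ' σ := by
  refine ⟨fun j hj => ?_, fun j hj => ?_⟩
  · exact (h.1 j (fun hc => hj ((h.inB_iff j).mpr hc))).symm
  · rw [h.blue_eq]
    exact (h.inB_iff j).mp hj

lemma REL.trans {σ σ' σ'' : Equiv.Perm (Fin n)} (h : REL lam q σ σ')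
    (h' : REL lam q σ' σ'') : REL lam q σ σ'' := by
  refine ⟨fun j hj => ?_, fun j hj => ?_⟩
  · rw [h'.1 j (fun hc => hj ((h.inB_iff j).mp hc)), h.1 j hj]
  · rw [← h.blue_eq]
    exact h'.2 j ((h.inB_iff j).mpr hj)

lemma REL.transversal {σ σ' : Equiv.Perm (Fin n)} (h : REL lam q σ σ')
    (ht : IsTransversal lam σ) : IsTransversal lam σ' := by
  intro j
  by_cases hb : Blue lam q σ (σ j) j
  · exact (h.2 j hb).1
  · rw [h.1 j hb]; exact ht j

end Rel
section LemC

variable {n l k : ℕ} {lam : Fin n → ℕ} {q : POP l}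

lemma ordSum_lt_iff (p : POP k) (q : POP l) (a b : ℕ) :
    (OrdSum p q).lt a b ↔ ((a ≤ k ∧ b ≤ k ∧ p.lt a b) ∨
      (k < a ∧ k < b ∧ q.lt (a-k) (b-k)) ∨ (1 ≤ a ∧ a ≤ k ∧ k < b ∧ b ≤ k + l)) :=
  Iff.rfl

/-- An occurrence of `p` all of whose cells are blue. -/
def BContains (lam : Fin n → ℕ) (q : POP l) (p : POP k) (σ : Equiv.Perm (Fin n)) : Prop :=
  ∃ (r c : Fin k → Fin n) (τ : Equiv.Perm (Fin k)),
    StrictMono r ∧ StrictMono c ∧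
    (∀ i j, Blue lam q σ (r i) (c j)) ∧
    (∀ j, σ (c j) = r (τ j)) ∧
    ∀ a b : Fin k, p.lt ((a:ℕ)+1) ((b:ℕ)+1) → τ a < τ b

set_option maxHeartbeats 1000000 in
lemma tcontains_iff_bcontains (hA : Antitone lam) (p : POP k) (hk : 1 ≤ k)
    (σ : Equiv.Perm (Fin n)) :
    (OrdSum p q).TContains lam σ ↔ BContains lam q p σ := by
  constructor
  · rintro ⟨r, c, τ, hr, hc, hcell, hmatch, hord⟩
    have hcross : ∀ a b : Fin (k+l), (a:ℕ) < k → k ≤ (b:ℕ) → τ a < τ b := by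
      intro a b ha hb
      refine hord a b ?_
      rw [ordSum_lt_iff]
      right; right
      exact ⟨by omega, by omega, by omega, by have := b.isLt; omega⟩
    have hlow : ∀ a : Fin (k+l), (a:ℕ) < k → (τ a : ℕ) < k := by
      intro a ha
      by_contra hge
      push_neg at hge
      have hl : 1 ≤ l := by have := (τ a).isLt; omega
      have hcardS : ((Finset.univ.filter fun b : Fin (k+l) => k ≤ (b:ℕ)).image τ).card = l := by
        rw [Finset.card_image_of_injective _ τ.injective]
        have he : (Finset.univ.filter fun b : Fin (k+l) => k ≤ (b:ℕ))
            = Finset.Ici (⟨k, by omega⟩ : Fin (k+l)) := by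
          ext x
          simp [Fin.le_def]
        rw [he, Fin.card_Ici]
        simp
      have hsub : ((Finset.univ.filter fun b : Fin (k+l) => k ≤ (b:ℕ)).image τ)
          ⊆ Finset.Ioi (τ a) := by
        intro x hx
        simp only [Finset.mem_image, Finset.mem_filter, Finset.mem_univ, true_and] at hx
        obtain ⟨b, hb, rfl⟩ := hx
        exact Finset.mem_Ioi.mpr (hcross a b ha hb)
      have hle := Finset.card_le_card hsub
      rw [hcardS, Fin.card_Ioi] at hle
      omega
    have hcastlt : ∀ a : Fin k, ((Fin.castAdd l a : Fin (k+l)) : ℕ) < k := by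
      intro a; simpa using a.isLt
    have hcastval : ∀ a : Fin k, ((Fin.castAdd l a : Fin (k+l)) : ℕ) = (a:ℕ) := by
      intro a; simp
    have hnatval : ∀ b : Fin l, ((Fin.natAdd k b : Fin (k+l)) : ℕ) = k + (b:ℕ) := by
      intro b; simp
    set g : Fin k → Fin k := fun a => ⟨(τ (Fin.castAdd l a) : ℕ), hlow _ (hcastlt a)⟩ with hg
    have hgval : ∀ a, (g a : ℕ) = (τ (Fin.castAdd l a) : ℕ) := fun a => rfl
    have hginj : Function.Injective g := by
      intro a b hab
      have h1 := congrArg Fin.val hab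
      have h1' : (τ (Fin.castAdd l a) : ℕ) = (τ (Fin.castAdd l b) : ℕ) := h1
      have h2 := τ.injective (Fin.ext h1')
      have h3 := congrArg Fin.val h2
      rw [hcastval, hcastval] at h3
      exact Fin.ext h3
    set τ' : Equiv.Perm (Fin k) :=
      Equiv.ofBijective g ((Finite.injective_iff_bijective).mp hginj) with hτ'
    have hτ'app : ∀ a, τ' a = g a := fun _ => rfl
    have hhigh : ∀ b : Fin (k+l), k ≤ (b:ℕ) → k ≤ (τ b : ℕ) := by
      intro b hb
      by_contra hlt
      push_neg at hlt
      obtain ⟨a, ha⟩ := (Finite.injective_iff_surjective).mp hginj ⟨(τ b : ℕ), hlt⟩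
      have h1 := congrArg Fin.val ha
      have h1' : (τ (Fin.castAdd l a) : ℕ) = (τ b : ℕ) := h1
      have h2 := τ.injective (Fin.ext h1')
      have h3 := congrArg Fin.val h2
      rw [hcastval] at h3
      have := a.isLt
      omega
    have hnatge : ∀ b : Fin l, k ≤ ((Fin.natAdd k b : Fin (k+l)) : ℕ) := by
      intro b; rw [hnatval]; omega
    set g2 : Fin l → Fin l := fun b =>
      ⟨(τ (Fin.natAdd k b) : ℕ) - k, by
        have h1 := hhigh _ (hnatge b)
        have h2 := (τ (Fin.natAdd k b)).isLt
        omega⟩ with hg2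
    have hg2val : ∀ b, (g2 b : ℕ) = (τ (Fin.natAdd k b) : ℕ) - k := fun b => rfl
    have hg2inj : Function.Injective g2 := by
      intro a b hab
      have hval : (τ (Fin.natAdd k a) : ℕ) - k = (τ (Fin.natAdd k b) : ℕ) - k :=
        congrArg Fin.val hab
      have h1 := hhigh _ (hnatge a)
      have h2 := hhigh _ (hnatge b)
      have h3 : τ (Fin.natAdd k a) = τ (Fin.natAdd k b) := Fin.ext (by omega)
      have h4 := congrArg Fin.val (τ.injective h3)
      rw [hnatval, hnatval] at h4
      exact Fin.ext (by omega)
    set π : Equiv.Perm (Fin l) :=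
      Equiv.ofBijective g2 ((Finite.injective_iff_bijective).mp hg2inj) with hπ
    have hπval : ∀ b, (π b : ℕ) = (τ (Fin.natAdd k b) : ℕ) - k := fun b => rfl
    have hcastmono : StrictMono (fun a : Fin k => (Fin.castAdd l a : Fin (k+l))) := by
      intro a b hab
      rw [Fin.lt_def, hcastval, hcastval]
      exact hab
    have hnatmono : StrictMono (fun b : Fin l => (Fin.natAdd k b : Fin (k+l))) := by
      intro a b hab
      rw [Fin.lt_def, hnatval, hnatval]
      exact Nat.add_lt_add_left hab k
    refine ⟨fun i => r (Fin.castAdd l i), fun j => c (Fin.castAdd l j), τ',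
      hr.comp hcastmono, hc.comp hcastmono, ?_, ?_, ?_⟩
    · -- blueness of the p-part cells
      intro i j
      refine ⟨hcell _ _, fun b => r (Fin.natAdd k b), fun b => c (Fin.natAdd k b), π,
        hr.comp hnatmono, hc.comp hnatmono, ?_, ?_, fun a b => hcell _ _, ?_, ?_,
        fun _ => trivial⟩
      · intro b
        refine hr ?_
        rw [Fin.lt_def, hcastval, hnatval]
        have := i.isLt
        omega
      · intro b
        refine hc ?_
        rw [Fin.lt_def, hcastval, hnatval]
        have := j.isLt
        omega
      · intro b
        rw [hmatch]
        congr 1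
        refine Fin.ext ?_
        rw [hnatval]
        have h1 := hhigh _ (hnatge b)
        rw [hπval]
        omega
      · intro a b hab
        have hq : (OrdSum p q).lt (((Fin.natAdd k a : Fin (k+l)) : ℕ)+1)
            (((Fin.natAdd k b : Fin (k+l)) : ℕ)+1) := by
          rw [ordSum_lt_iff, hnatval, hnatval]
          right; left
          refine ⟨by omega, by omega, ?_⟩
          have h1 : k + (a:ℕ) + 1 - k = (a:ℕ) + 1 := by omega
          have h2 : k + (b:ℕ) + 1 - k = (b:ℕ) + 1 := by omega
          rw [h1, h2]
          exact hab
        have h3 : (τ (Fin.natAdd k a) : ℕ) < (τ (Fin.natAdd k b) : ℕ) := hord _ _ hq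
        have h4 := hhigh _ (hnatge a)
        rw [Fin.lt_def, hπval, hπval]
        omega
    · -- matching
      intro j
      rw [hmatch]
      congr 1
    · -- p order
      intro a b hab
      have hp : (OrdSum p q).lt (((Fin.castAdd l a : Fin (k+l)) : ℕ)+1)
          (((Fin.castAdd l b : Fin (k+l)) : ℕ)+1) := by
        rw [ordSum_lt_iff, hcastval, hcastval]
        left
        have hsa := p.supp _ _ hab
        exact ⟨by omega, by omega, hab⟩
      have h3 : (τ (Fin.castAdd l a) : ℕ) < (τ (Fin.castAdd l b) : ℕ) := hord _ _ hp
      rw [Fin.lt_def, hτ'app, hτ'app, hgval, hgval]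
      exact h3
  · rintro ⟨r, c, τ, hr, hc, hblue, hmatch, hord⟩
    set K : Fin k := ⟨k-1, by omega⟩ with hK
    obtain ⟨R, C, π, w1, w2, w3, w4, w5, w6, w7, -⟩ := (hblue K K).2
    have hrK : ∀ i : Fin k, r i ≤ r K := by
      intro i
      refine hr.monotone ?_
      rw [Fin.le_def]
      have := i.isLt
      simp only [hK]
      omega
    have hcK : ∀ j : Fin k, c j ≤ c K := by
      intro j
      refine hc.monotone ?_
      rw [Fin.le_def]
      have := j.isLt
      simp only [hK]
      omega
    have hsub : ∀ x : Fin (k+l), ¬ (x:ℕ) < k → (x:ℕ) - k < l := by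
      intro x h
      have := x.isLt
      omega
    set r2 : Fin (k+l) → Fin n := fun x =>
      if h : (x:ℕ) < k then r ⟨x, h⟩ else R ⟨(x:ℕ) - k, hsub x h⟩ with hr2
    set c2 : Fin (k+l) → Fin n := fun x =>
      if h : (x:ℕ) < k then c ⟨x, h⟩ else C ⟨(x:ℕ) - k, hsub x h⟩ with hc2
    set f2 : Fin (k+l) → Fin (k+l) := fun x =>
      if h : (x:ℕ) < k then ⟨(τ ⟨x, h⟩ : ℕ), by have := (τ ⟨x,h⟩).isLt; omega⟩
      else ⟨k + (π ⟨(x:ℕ) - k, hsub x h⟩ : ℕ),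
        by have := (π ⟨(x:ℕ) - k, hsub x h⟩).isLt; omega⟩ with hf2
    have hr2low : ∀ (x : Fin (k+l)) (h : (x:ℕ) < k), r2 x = r ⟨(x:ℕ), h⟩ := by
      intro x h
      simp only [hr2]
      rw [dif_pos h]
    have hr2high : ∀ (x : Fin (k+l)) (h : ¬ (x:ℕ) < k),
        r2 x = R ⟨(x:ℕ) - k, hsub x h⟩ := by
      intro x h
      simp only [hr2]
      rw [dif_neg h]
    have hc2low : ∀ (x : Fin (k+l)) (h : (x:ℕ) < k), c2 x = c ⟨(x:ℕ), h⟩ := by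
      intro x h
      simp only [hc2]
      rw [dif_pos h]
    have hc2high : ∀ (x : Fin (k+l)) (h : ¬ (x:ℕ) < k),
        c2 x = C ⟨(x:ℕ) - k, hsub x h⟩ := by
      intro x h
      simp only [hc2]
      rw [dif_neg h]
    have hf2low : ∀ (x : Fin (k+l)) (h : (x:ℕ) < k), (f2 x : ℕ) = (τ ⟨(x:ℕ), h⟩ : ℕ) := by
      intro x h
      simp only [hf2]
      rw [dif_pos h]
    have hf2high : ∀ (x : Fin (k+l)) (h : ¬ (x:ℕ) < k),
        (f2 x : ℕ) = k + (π ⟨(x:ℕ) - k, hsub x h⟩ : ℕ) := by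
      intro x h
      simp only [hf2]
      rw [dif_neg h]
    have hf2inj : Function.Injective f2 := by
      intro x y hxy
      have hval := congrArg Fin.val hxy
      by_cases hx : (x:ℕ) < k <;> by_cases hy : (y:ℕ) < k
      · rw [hf2low x hx, hf2low y hy] at hval
        have h2 := congrArg Fin.val (τ.injective (Fin.ext hval))
        exact Fin.ext h2
      · rw [hf2low x hx, hf2high y hy] at hval
        exfalso
        have := (τ ⟨(x:ℕ), hx⟩).isLt
        omega
      · rw [hf2high x hx, hf2low y hy] at hval
        exfalso
        have := (τ ⟨(y:ℕ), hy⟩).isLt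
        omega
      · rw [hf2high x hx, hf2high y hy] at hval
        have h1 : (π ⟨(x:ℕ) - k, hsub x hx⟩ : ℕ)
            = (π ⟨(y:ℕ) - k, hsub y hy⟩ : ℕ) := by omega
        have h2 := congrArg Fin.val (π.injective (Fin.ext h1))
        simp only at h2
        exact Fin.ext (by omega)
    set τ2 : Equiv.Perm (Fin (k+l)) :=
      Equiv.ofBijective f2 ((Finite.injective_iff_bijective).mp hf2inj) with hτ2
    have hτ2app : ∀ x, τ2 x = f2 x := fun _ => rfl
    have hl' : ∀ x : Fin (k+l), ¬ (x:ℕ) < k → 0 < l := by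
      intro x hx; have := x.isLt; omega
    refine ⟨r2, c2, τ2, ?_, ?_, ?_, ?_, ?_⟩
    · intro x y hxy
      have hxy' : (x:ℕ) < (y:ℕ) := hxy
      by_cases hx : (x:ℕ) < k <;> by_cases hy : (y:ℕ) < k
      · rw [hr2low x hx, hr2low y hy]
        exact hr (Fin.mk_lt_mk.mpr hxy')
      · rw [hr2low x hx, hr2high y hy]
        exact lt_of_le_of_lt (hrK _) (w3 _)
      · omega
      · rw [hr2high x hx, hr2high y hy]
        exact w1 (Fin.mk_lt_mk.mpr (by omega))
    · intro x y hxy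
      have hxy' : (x:ℕ) < (y:ℕ) := hxy
      by_cases hx : (x:ℕ) < k <;> by_cases hy : (y:ℕ) < k
      · rw [hc2low x hx, hc2low y hy]
        exact hc (Fin.mk_lt_mk.mpr hxy')
      · rw [hc2low x hx, hc2high y hy]
        exact lt_of_le_of_lt (hcK _) (w4 _)
      · omega
      · rw [hc2high x hx, hc2high y hy]
        exact w2 (Fin.mk_lt_mk.mpr (by omega))
    · intro i j
      by_cases hi : (i:ℕ) < k <;> by_cases hj : (j:ℕ) < k
      · rw [hr2low i hi, hc2low j hj]
        exact (hblue _ _).1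
      · rw [hr2low i hi, hc2high j hj]
        calc ((C ⟨(j:ℕ) - k, hsub j hj⟩ : Fin n) : ℕ)
            < lam (R ⟨0, hl' j hj⟩) := w5 _ _
          _ ≤ lam (r ⟨(i:ℕ), hi⟩) := hA (le_of_lt (lt_of_le_of_lt (hrK _) (w3 _)))
      · rw [hr2high i hi, hc2low j hj]
        calc ((c ⟨(j:ℕ), hj⟩ : Fin n) : ℕ) ≤ ((c K : Fin n) : ℕ) := hcK _
          _ < ((C ⟨0, hl' i hi⟩ : Fin n) : ℕ) := w4 _
          _ < lam (R _) := w5 _ _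
      · rw [hr2high i hi, hc2high j hj]
        exact w5 _ _
    · intro j
      by_cases hj : (j:ℕ) < k
      · have hfl : ((f2 j : Fin (k+l)) : ℕ) < k := by
          rw [hf2low j hj]
          exact (τ ⟨(j:ℕ), hj⟩).isLt
        rw [hτ2app, hc2low j hj, hmatch, hr2low (f2 j) hfl]
        congr 1
        exact Fin.ext (hf2low j hj).symm
      · have hfh : ¬ ((f2 j : Fin (k+l)) : ℕ) < k := by
          rw [hf2high j hj]
          omega
        rw [hτ2app, hc2high j hj, w6, hr2high (f2 j) hfh]
        congr 1
        refine Fin.ext ?_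
        show (π ⟨(j:ℕ) - k, hsub j hj⟩ : ℕ) = ((f2 j : Fin (k+l)) : ℕ) - k
        rw [hf2high j hj]
        omega
    · intro a b hab
      rw [ordSum_lt_iff] at hab
      rw [hτ2app, hτ2app, Fin.lt_def]
      rcases hab with ⟨ha, hb, hp⟩ | ⟨ha, hb, hq⟩ | ⟨-, ha, hb, -⟩
      · have ha' : (a:ℕ) < k := by omega
        have hb' : (b:ℕ) < k := by omega
        rw [hf2low a ha', hf2low b hb']
        exact hord ⟨(a:ℕ), ha'⟩ ⟨(b:ℕ), hb'⟩ hp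
      · have ha' : ¬ (a:ℕ) < k := by omega
        have hb' : ¬ (b:ℕ) < k := by omega
        rw [hf2high a ha', hf2high b hb']
        have h1 : (a:ℕ) + 1 - k = ((a:ℕ) - k) + 1 := by omega
        have h2 : (b:ℕ) + 1 - k = ((b:ℕ) - k) + 1 := by omega
        rw [h1, h2] at hq
        have h3 := w7 ⟨(a:ℕ) - k, hsub a ha'⟩ ⟨(b:ℕ) - k, hsub b hb'⟩ hq
        exact Nat.add_lt_add_left h3 k
      · have ha' : (a:ℕ) < k := by omega
        have hb' : ¬ (b:ℕ) < k := by omega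
        rw [hf2low a ha', hf2high b hb']
        have := (τ ⟨(a:ℕ), ha'⟩).isLt
        omega

end LemC
section Internal

attribute [local instance] Classical.propDecidable

variable {n l : ℕ}

/-- Lower subsets of `Fin m` are initial segments. -/
lemma mem_lower_iff_lt_card {m : ℕ} (S : Finset (Fin m))
    (hS : ∀ ⦃b b' : Fin m⦄, b' ≤ b → b ∈ S → b' ∈ S) (b : Fin m) :
    b ∈ S ↔ (b:ℕ) < S.card := by
  constructor
  · intro hb
    have hsub : Finset.Iic b ⊆ S := fun x hx => hS (Finset.mem_Iic.mp hx) hb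
    have := Finset.card_le_card hsub
    rw [Fin.card_Iic] at this
    omega
  · intro hb
    by_contra hnb
    have hsub : S ⊆ Finset.Iio b := by
      intro x hx
      rw [Finset.mem_Iio]
      by_contra hxb
      push_neg at hxb
      exact hnb (hS hxb hx)
    have := Finset.card_le_card hsub
    rw [Fin.card_Iio] at this
    omega

variable (lam : Fin n → ℕ) (q : POP l) (σ₀ : Equiv.Perm (Fin n))

/-- The internal columns: columns whose 1 lies at a blue cell. -/
noncomputable def IntColF : Finset (Fin n) :=
  Finset.filter (fun j => Blue lam q σ₀ (σ₀ j) j) Finset.univ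

/-- The internal rows. -/
noncomputable def IntRowF : Finset (Fin n) := (IntColF lam q σ₀).image σ₀

/-- Number of internal rows/columns. -/
noncomputable def mI : ℕ := (IntColF lam q σ₀).card

lemma mem_IntColF (j : Fin n) : j ∈ IntColF lam q σ₀ ↔ Blue lam q σ₀ (σ₀ j) j := by
  unfold IntColF
  rw [Finset.mem_filter]
  simp

lemma mem_IntRowF (x : Fin n) : x ∈ IntRowF lam q σ₀ ↔ σ₀.symm x ∈ IntColF lam q σ₀ := by
  unfold IntRowF
  rw [Finset.mem_image]
  constructor
  · rintro ⟨j, hj, rfl⟩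
    simpa using hj
  · intro hx
    exact ⟨σ₀.symm x, hx, by simp⟩

lemma card_IntRowF : (IntRowF lam q σ₀).card = mI lam q σ₀ :=
  Finset.card_image_of_injective _ σ₀.injective

/-- Enumeration of the internal columns, as elements of `Fin n`. -/
noncomputable def colV : Fin (mI lam q σ₀) → Fin n :=
  fun b => (IntColF lam q σ₀).orderEmbOfFin rfl b

/-- Enumeration of the internal rows. -/
noncomputable def rowV : Fin (mI lam q σ₀) → Fin n :=
  fun a => (IntRowF lam q σ₀).orderEmbOfFin (card_IntRowF lam q σ₀) a

lemma colV_mem (b) : colV lam q σ₀ b ∈ IntColF lam q σ₀ :=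
  Finset.orderEmbOfFin_mem _ _ _

lemma rowV_mem (a) : rowV lam q σ₀ a ∈ IntRowF lam q σ₀ :=
  Finset.orderEmbOfFin_mem _ _ _

lemma colV_lt_iff (a b) : colV lam q σ₀ a < colV lam q σ₀ b ↔ a < b :=
  ((IntColF lam q σ₀).orderEmbOfFin rfl).lt_iff_lt

lemma rowV_lt_iff (a b) : rowV lam q σ₀ a < rowV lam q σ₀ b ↔ a < b :=
  ((IntRowF lam q σ₀).orderEmbOfFin (card_IntRowF lam q σ₀)).lt_iff_lt

lemma colV_le_iff (a b) : colV lam q σ₀ a ≤ colV lam q σ₀ b ↔ a ≤ b :=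
  ((IntColF lam q σ₀).orderEmbOfFin rfl).le_iff_le

lemma colV_inj : Function.Injective (colV lam q σ₀) :=
  ((IntColF lam q σ₀).orderEmbOfFin rfl).injective

lemma rowV_inj : Function.Injective (rowV lam q σ₀) :=
  ((IntRowF lam q σ₀).orderEmbOfFin (card_IntRowF lam q σ₀)).injective

lemma colV_surj (x : Fin n) (hx : x ∈ IntColF lam q σ₀) : ∃ b, colV lam q σ₀ b = x := by
  have h1 := (IntColF lam q σ₀).range_orderEmbOfFin rfl
  have hx' : x ∈ Set.range ((IntColF lam q σ₀).orderEmbOfFin rfl) := by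
    rw [h1]; exact hx
  obtain ⟨b, hb⟩ := hx'
  exact ⟨b, hb⟩

lemma rowV_surj (x : Fin n) (hx : x ∈ IntRowF lam q σ₀) : ∃ a, rowV lam q σ₀ a = x := by
  have h1 := (IntRowF lam q σ₀).range_orderEmbOfFin (card_IntRowF lam q σ₀)
  have hx' : x ∈ Set.range ((IntRowF lam q σ₀).orderEmbOfFin (card_IntRowF lam q σ₀)) := by
    rw [h1]; exact hx
  obtain ⟨a, ha⟩ := hx'
  exact ⟨a, ha⟩

/-- The internal board. -/
noncomputable def nuF : Fin (mI lam q σ₀) → ℕ :=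
  fun a => (Finset.filter (fun b => Blue lam q σ₀ (rowV lam q σ₀ a) (colV lam q σ₀ b))
    Finset.univ).card

lemma blue_iff_nu (hA : Antitone lam) (a b : Fin (mI lam q σ₀)) :
    Blue lam q σ₀ (rowV lam q σ₀ a) (colV lam q σ₀ b) ↔ (b:ℕ) < nuF lam q σ₀ a := by
  unfold nuF
  rw [← mem_lower_iff_lt_card _ ?lower b]
  · rw [Finset.mem_filter]
    simp
  case lower =>
    intro x y hyx hx
    rw [Finset.mem_filter] at hx ⊢
    refine ⟨Finset.mem_univ _, Blue.mono hA (le_refl _) ?_ hx.2⟩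
    rw [colV_le_iff]
    exact hyx

lemma nu_anti (hA : Antitone lam) : Antitone (nuF lam q σ₀) := by
  intro a a' haa'
  unfold nuF
  refine Finset.card_le_card ?_
  intro b hb
  rw [Finset.mem_filter] at hb ⊢
  refine ⟨Finset.mem_univ _, Blue.mono hA ?_ (le_refl _) hb.2⟩
  rcases eq_or_lt_of_le haa' with rfl | hlt
  · exact le_refl _
  · exact le_of_lt ((rowV_lt_iff lam q σ₀ a a').mpr hlt)

lemma nu_pos (a : Fin (mI lam q σ₀)) : 0 < nuF lam q σ₀ a := by
  have hmem := rowV_mem lam q σ₀ a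
  rw [mem_IntRowF] at hmem
  obtain ⟨b, hb⟩ := colV_surj lam q σ₀ _ hmem
  have hmem' := (mem_IntColF lam q σ₀ _).mp hmem
  have hblue : Blue lam q σ₀ (rowV lam q σ₀ a) (colV lam q σ₀ b) := by
    rw [hb]
    have h2 : σ₀ (σ₀.symm (rowV lam q σ₀ a)) = rowV lam q σ₀ a := by simp
    rw [h2] at hmem'
    exact hmem'
  refine Finset.card_pos.mpr ⟨b, ?_⟩
  rw [Finset.mem_filter]
  exact ⟨Finset.mem_univ _, hblue⟩

end Internal
section RhoPsi

attribute [local instance] Classical.propDecidable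

variable {n l : ℕ} (lam : Fin n → ℕ) (q : POP l) (σ₀ : Equiv.Perm (Fin n))

noncomputable def rowIdx : {x // x ∈ IntRowF lam q σ₀} → Fin (mI lam q σ₀) :=
  ((IntRowF lam q σ₀).orderIsoOfFin (card_IntRowF lam q σ₀)).symm

noncomputable def colIdx : {x // x ∈ IntColF lam q σ₀} → Fin (mI lam q σ₀) :=
  ((IntColF lam q σ₀).orderIsoOfFin rfl).symm

lemma rowV_rowIdx (x : {x // x ∈ IntRowF lam q σ₀}) :
    rowV lam q σ₀ (rowIdx lam q σ₀ x) = (x : Fin n) := by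
  unfold rowV rowIdx
  rw [← Finset.coe_orderIsoOfFin_apply, OrderIso.apply_symm_apply]

lemma colV_colIdx (x : {x // x ∈ IntColF lam q σ₀}) :
    colV lam q σ₀ (colIdx lam q σ₀ x) = (x : Fin n) := by
  unfold colV colIdx
  rw [← Finset.coe_orderIsoOfFin_apply, OrderIso.apply_symm_apply]

lemma colIdx_colV (b : Fin (mI lam q σ₀)) (h : colV lam q σ₀ b ∈ IntColF lam q σ₀) :
    colIdx lam q σ₀ ⟨colV lam q σ₀ b, h⟩ = b := by
  apply colV_inj lam q σ₀
  rw [colV_colIdx]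

variable {σ : Equiv.Perm (Fin n)}

lemma rel_symm_mem (hrel : REL lam q σ₀ σ) (x : Fin n) :
    σ.symm x ∈ IntColF lam q σ₀ ↔ σ₀.symm x ∈ IntColF lam q σ₀ := by
  constructor
  · intro hx
    by_contra hnx
    have hnb : ¬ Blue lam q σ₀ (σ₀ (σ₀.symm x)) (σ₀.symm x) := by
      rw [← mem_IntColF]; exact hnx
    have h1 : σ (σ₀.symm x) = x := by
      rw [hrel.1 _ hnb, Equiv.apply_symm_apply]
    have h2 : σ.symm x = σ₀.symm x := by
      apply σ.injective
      rw [Equiv.apply_symm_apply, h1]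
    rw [h2] at hx
    exact hnx hx
  · intro hx
    by_contra hnx
    have hnb : ¬ Blue lam q σ₀ (σ₀ (σ.symm x)) (σ.symm x) := by
      rw [← mem_IntColF]; exact hnx
    have h1 : σ (σ.symm x) = σ₀ (σ.symm x) := hrel.1 _ hnb
    rw [Equiv.apply_symm_apply] at h1
    have h2 : σ₀.symm x = σ.symm x := by
      apply σ₀.injective
      rw [Equiv.apply_symm_apply]
      exact h1
    rw [h2] at hx
    exact hnx hx

lemma mem_IntRowF_of_rel (hrel : REL lam q σ₀ σ) (j : Fin n) (hj : j ∈ IntColF lam q σ₀) :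
    σ j ∈ IntRowF lam q σ₀ := by
  rw [mem_IntRowF, ← rel_symm_mem lam q σ₀ hrel, Equiv.symm_apply_apply]
  exact hj

/-- The internal sub-permutation of `σ` (raw map). -/
noncomputable def rhoF (σ : Equiv.Perm (Fin n)) : Fin (mI lam q σ₀) → Fin (mI lam q σ₀) :=
  fun b => if h : σ (colV lam q σ₀ b) ∈ IntRowF lam q σ₀
    then rowIdx lam q σ₀ ⟨σ (colV lam q σ₀ b), h⟩ else b

lemma rowV_rhoF (hrel : REL lam q σ₀ σ) (b : Fin (mI lam q σ₀)) :
    rowV lam q σ₀ (rhoF lam q σ₀ σ b) = σ (colV lam q σ₀ b) := by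
  unfold rhoF
  rw [dif_pos (mem_IntRowF_of_rel lam q σ₀ hrel _ (colV_mem lam q σ₀ b))]
  rw [rowV_rowIdx]

lemma rhoF_inj (hrel : REL lam q σ₀ σ) : Function.Injective (rhoF lam q σ₀ σ) := by
  intro a b hab
  have h1 : σ (colV lam q σ₀ a) = σ (colV lam q σ₀ b) := by
    rw [← rowV_rhoF lam q σ₀ hrel, ← rowV_rhoF lam q σ₀ hrel, hab]
  exact colV_inj lam q σ₀ (σ.injective h1)

/-- The internal sub-permutation of `σ`. -/
noncomputable def rhoP (σ : Equiv.Perm (Fin n)) : Equiv.Perm (Fin (mI lam q σ₀)) :=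
  if h : Function.Bijective (rhoF lam q σ₀ σ) then Equiv.ofBijective _ h else 1

lemma rhoP_eq (hrel : REL lam q σ₀ σ) (b : Fin (mI lam q σ₀)) :
    rhoP lam q σ₀ σ b = rhoF lam q σ₀ σ b := by
  unfold rhoP
  rw [dif_pos ((Finite.injective_iff_bijective).mp (rhoF_inj lam q σ₀ hrel))]
  rfl

lemma rowV_rhoP (hrel : REL lam q σ₀ σ) (b : Fin (mI lam q σ₀)) :
    rowV lam q σ₀ (rhoP lam q σ₀ σ b) = σ (colV lam q σ₀ b) := by
  rw [rhoP_eq lam q σ₀ hrel]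
  exact rowV_rhoF lam q σ₀ hrel b

lemma rhoP_transversal (hA : Antitone lam) (hrel : REL lam q σ₀ σ) :
    IsTransversal (nuF lam q σ₀) (rhoP lam q σ₀ σ) := by
  intro b
  rw [← blue_iff_nu lam q σ₀ hA, rowV_rhoP lam q σ₀ hrel]
  have h1 : Blue lam q σ₀ (σ₀ (colV lam q σ₀ b)) (colV lam q σ₀ b) :=
    (mem_IntColF lam q σ₀ _).mp (colV_mem lam q σ₀ b)
  exact hrel.2 _ h1

/-- Replacing the internal part of `σ₀` by `ρ'` (raw map). -/
noncomputable def psiF (ρ' : Equiv.Perm (Fin (mI lam q σ₀))) : Fin n → Fin n :=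
  fun j => if h : j ∈ IntColF lam q σ₀
    then rowV lam q σ₀ (ρ' (colIdx lam q σ₀ ⟨j, h⟩)) else σ₀ j

lemma psiF_int (ρ' : Equiv.Perm (Fin (mI lam q σ₀))) (b : Fin (mI lam q σ₀)) :
    psiF lam q σ₀ ρ' (colV lam q σ₀ b) = rowV lam q σ₀ (ρ' b) := by
  unfold psiF
  rw [dif_pos (colV_mem lam q σ₀ b), colIdx_colV]

lemma psiF_ext (ρ' : Equiv.Perm (Fin (mI lam q σ₀))) (j : Fin n)
    (hj : j ∉ IntColF lam q σ₀) : psiF lam q σ₀ ρ' j = σ₀ j := by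
  unfold psiF
  rw [dif_neg hj]

lemma sigma0_not_mem_IntRowF (j : Fin n) (hj : j ∉ IntColF lam q σ₀) :
    σ₀ j ∉ IntRowF lam q σ₀ := by
  rw [mem_IntRowF, Equiv.symm_apply_apply]
  exact hj

lemma psiF_inj (ρ' : Equiv.Perm (Fin (mI lam q σ₀))) :
    Function.Injective (psiF lam q σ₀ ρ') := by
  intro x y hxy
  unfold psiF at hxy
  by_cases hx : x ∈ IntColF lam q σ₀ <;> by_cases hy : y ∈ IntColF lam q σ₀
  · rw [dif_pos hx, dif_pos hy] at hxy
    have h1 := ρ'.injective (rowV_inj lam q σ₀ hxy)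
    have h2 := colV_inj lam q σ₀ (congrArg (colV lam q σ₀) h1)
    have h3 := congrArg (colV lam q σ₀) h1
    rw [colV_colIdx, colV_colIdx] at h3
    exact h3
  · rw [dif_pos hx, dif_neg hy] at hxy
    exact absurd (hxy ▸ rowV_mem lam q σ₀ (ρ' (colIdx lam q σ₀ ⟨x, hx⟩)))
      (sigma0_not_mem_IntRowF lam q σ₀ y hy)
  · rw [dif_neg hx, dif_pos hy] at hxy
    exact absurd (hxy ▸ rowV_mem lam q σ₀ (ρ' (colIdx lam q σ₀ ⟨y, hy⟩)))
      (sigma0_not_mem_IntRowF lam q σ₀ x hx)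
  · rw [dif_neg hx, dif_neg hy] at hxy
    exact σ₀.injective hxy

/-- Replacing the internal part of `σ₀` by `ρ'`. -/
noncomputable def psiP (ρ' : Equiv.Perm (Fin (mI lam q σ₀))) : Equiv.Perm (Fin n) :=
  if h : Function.Bijective (psiF lam q σ₀ ρ') then Equiv.ofBijective _ h else 1

lemma psiP_eq (ρ' : Equiv.Perm (Fin (mI lam q σ₀))) (j : Fin n) :
    psiP lam q σ₀ ρ' j = psiF lam q σ₀ ρ' j := by
  unfold psiP
  rw [dif_pos ((Finite.injective_iff_bijective).mp (psiF_inj lam q σ₀ ρ'))]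
  rfl

lemma psi_rel (hA : Antitone lam) (ρ' : Equiv.Perm (Fin (mI lam q σ₀)))
    (hρt : IsTransversal (nuF lam q σ₀) ρ') : REL lam q σ₀ (psiP lam q σ₀ ρ') := by
  constructor
  · intro j hj
    rw [psiP_eq]
    refine psiF_ext lam q σ₀ ρ' j ?_
    rw [mem_IntColF]
    exact hj
  · intro j hj
    have hjm : j ∈ IntColF lam q σ₀ := (mem_IntColF lam q σ₀ j).mpr hj
    rw [psiP_eq]
    unfold psiF
    rw [dif_pos hjm]
    have h1 : Blue lam q σ₀ (rowV lam q σ₀ (ρ' (colIdx lam q σ₀ ⟨j, hjm⟩)))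
        (colV lam q σ₀ (colIdx lam q σ₀ ⟨j, hjm⟩)) :=
      (blue_iff_nu lam q σ₀ hA _ _).mpr (hρt _)
    rw [colV_colIdx] at h1
    exact h1

lemma rho_psi (hA : Antitone lam) (ρ' : Equiv.Perm (Fin (mI lam q σ₀)))
    (hρt : IsTransversal (nuF lam q σ₀) ρ') :
    rhoP lam q σ₀ (psiP lam q σ₀ ρ') = ρ' := by
  have hrel := psi_rel lam q σ₀ hA ρ' hρt
  refine Equiv.ext fun b => ?_
  apply rowV_inj lam q σ₀
  rw [rowV_rhoP lam q σ₀ hrel, psiP_eq, psiF_int]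

lemma psi_rho (hrel : REL lam q σ₀ σ) : psiP lam q σ₀ (rhoP lam q σ₀ σ) = σ := by
  refine Equiv.ext fun j => ?_
  rw [psiP_eq]
  by_cases hj : j ∈ IntColF lam q σ₀
  · unfold psiF
    rw [dif_pos hj, rowV_rhoP lam q σ₀ hrel, colV_colIdx]
  · rw [psiF_ext lam q σ₀ _ j hj]
    refine (hrel.1 j ?_).symm
    rw [← mem_IntColF]
    exact hj

lemma bcontains_iff_int (hA : Antitone lam) {k : ℕ} (p : POP k)
    (hrel : REL lam q σ₀ σ) :
    BContains lam q p σ ↔ p.TContains (nuF lam q σ₀) (rhoP lam q σ₀ σ) := by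
  constructor
  · rintro ⟨r, c, τ, hr, hc, hblue, hmatch, hord⟩
    have hcmem : ∀ j, c j ∈ IntColF lam q σ₀ := by
      intro j
      rw [mem_IntColF, ← hrel.inB_iff, hmatch j]
      exact hblue _ _
    have hrmem : ∀ i, r i ∈ IntRowF lam q σ₀ := by
      intro i
      have h1 : σ (c (τ.symm i)) = r i := by
        rw [hmatch]
        congr 1
        exact τ.apply_symm_apply i
      rw [← h1]
      exact mem_IntRowF_of_rel lam q σ₀ hrel _ (hcmem _)
    refine ⟨fun i => rowIdx lam q σ₀ ⟨r i, hrmem i⟩,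
      fun j => colIdx lam q σ₀ ⟨c j, hcmem j⟩, τ, ?_, ?_, ?_, ?_, hord⟩
    · intro a b hab
      rw [← rowV_lt_iff lam q σ₀, rowV_rowIdx, rowV_rowIdx]
      exact hr hab
    · intro a b hab
      rw [← colV_lt_iff lam q σ₀, colV_colIdx, colV_colIdx]
      exact hc hab
    · intro i j
      rw [← blue_iff_nu lam q σ₀ hA, rowV_rowIdx, colV_colIdx, ← hrel.blue_eq]
      exact hblue i j
    · intro j
      apply rowV_inj lam q σ₀
      rw [rowV_rhoP lam q σ₀ hrel, colV_colIdx, rowV_rowIdx, hmatch]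
  · rintro ⟨r', c', τ, hr', hc', hcell, hmatch', hord⟩
    refine ⟨fun i => rowV lam q σ₀ (r' i), fun j => colV lam q σ₀ (c' j), τ, ?_, ?_, ?_, ?_, hord⟩
    · intro a b hab
      rw [rowV_lt_iff]
      exact hr' hab
    · intro a b hab
      rw [colV_lt_iff]
      exact hc' hab
    · intro i j
      rw [hrel.blue_eq]
      exact (blue_iff_nu lam q σ₀ hA _ _).mpr (hcell i j)
    · intro j
      rw [← rowV_rhoP lam q σ₀ hrel, hmatch' j]

end RhoPsi
section Count

attribute [local instance] Classical.propDecidable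

variable {n l : ℕ} (lam : Fin n → ℕ) (q : POP l)

noncomputable def relSetoid : Setoid (Equiv.Perm (Fin n)) :=
  ⟨REL lam q, ⟨REL.refl, REL.symm, REL.trans⟩⟩

/-- Canonical representative of the class of `σ`. -/
noncomputable def cREP (σ : Equiv.Perm (Fin n)) : Equiv.Perm (Fin n) :=
  Quotient.out (Quotient.mk (relSetoid lam q) σ)

lemma cREP_rel (σ : Equiv.Perm (Fin n)) : REL lam q (cREP lam q σ) σ :=
  @Quotient.mk_out _ (relSetoid lam q) σ

lemma cREP_eq_of_rel {σ σ' : Equiv.Perm (Fin n)} (h : REL lam q σ σ') :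
    cREP lam q σ = cREP lam q σ' := by
  unfold cREP
  congr 1
  exact Quotient.sound h

lemma cREP_idem (σ : Equiv.Perm (Fin n)) : cREP lam q (cREP lam q σ) = cREP lam q σ :=
  cREP_eq_of_rel lam q (cREP_rel lam q σ)

/-- Transport of internal transversals along a family of equivalences. -/
noncomputable def EEfun {k k' : ℕ} (p : POP k) (p' : POP k')
    (E : ∀ σc : Equiv.Perm (Fin n),
      {ρ : Equiv.Perm (Fin (mI lam q σc)) //
        IsTransversal (nuF lam q σc) ρ ∧ ¬ p.TContains (nuF lam q σc) ρ} ≃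
      {ρ : Equiv.Perm (Fin (mI lam q σc)) //
        IsTransversal (nuF lam q σc) ρ ∧ ¬ p'.TContains (nuF lam q σc) ρ})
    (σc : Equiv.Perm (Fin n)) (ρ : Equiv.Perm (Fin (mI lam q σc))) :
    Equiv.Perm (Fin (mI lam q σc)) :=
  if hg : IsTransversal (nuF lam q σc) ρ ∧ ¬ p.TContains (nuF lam q σc) ρ
    then (E σc ⟨ρ, hg⟩).1 else ρ

lemma EEfun_good {k k' : ℕ} (p : POP k) (p' : POP k') (E) (σc : Equiv.Perm (Fin n))
    (ρ : Equiv.Perm (Fin (mI lam q σc)))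
    (h1 : IsTransversal (nuF lam q σc) ρ) (h2 : ¬ p.TContains (nuF lam q σc) ρ) :
    IsTransversal (nuF lam q σc) (EEfun lam q p p' E σc ρ) ∧
      ¬ p'.TContains (nuF lam q σc) (EEfun lam q p p' E σc ρ) := by
  unfold EEfun
  rw [dif_pos ⟨h1, h2⟩]
  exact (E σc ⟨ρ, ⟨h1, h2⟩⟩).2

lemma EEfun_inv {k k' : ℕ} (p : POP k) (p' : POP k') (E) (σc : Equiv.Perm (Fin n))
    (ρ : Equiv.Perm (Fin (mI lam q σc)))
    (h1 : IsTransversal (nuF lam q σc) ρ) (h2 : ¬ p.TContains (nuF lam q σc) ρ) :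
    EEfun lam q p' p (fun t => (E t).symm) σc (EEfun lam q p p' E σc ρ) = ρ := by
  have e1 : EEfun lam q p p' E σc ρ = (E σc ⟨ρ, ⟨h1, h2⟩⟩).1 := by
    unfold EEfun
    rw [dif_pos ⟨h1, h2⟩]
  rw [e1]
  unfold EEfun
  rw [dif_pos (E σc ⟨ρ, ⟨h1, h2⟩⟩).2]
  show ((E σc).symm (E σc ⟨ρ, ⟨h1, h2⟩⟩)).1 = ρ
  rw [Equiv.symm_apply_apply]

lemma EEfun_inv' {k k' : ℕ} (p : POP k) (p' : POP k') (E) (σc : Equiv.Perm (Fin n))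
    (ρ : Equiv.Perm (Fin (mI lam q σc)))
    (h1 : IsTransversal (nuF lam q σc) ρ) (h2 : ¬ p'.TContains (nuF lam q σc) ρ) :
    EEfun lam q p p' E σc (EEfun lam q p' p (fun t => (E t).symm) σc ρ) = ρ := by
  have e1 : EEfun lam q p' p (fun t => (E t).symm) σc ρ = ((E σc).symm ⟨ρ, ⟨h1, h2⟩⟩).1 := by
    unfold EEfun
    rw [dif_pos ⟨h1, h2⟩]
  rw [e1]
  unfold EEfun
  rw [dif_pos ((E σc).symm ⟨ρ, ⟨h1, h2⟩⟩).2]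
  show (E σc ((E σc).symm ⟨ρ, ⟨h1, h2⟩⟩)).1 = ρ
  rw [Equiv.apply_symm_apply]

end Count
section EdgeCases

lemma pop_zero_lt_false (p : POP 0) (a b : ℕ) : ¬ p.lt a b := by
  intro hl
  have := p.supp a b hl
  omega

lemma tcontains_congr {s m : ℕ} (P P' : POP s) (hPP' : ∀ a b, P.lt a b ↔ P'.lt a b)
    (lam : Fin m → ℕ) (σ : Equiv.Perm (Fin m)) :
    P.TContains lam σ ↔ P'.TContains lam σ := by
  constructor
  · rintro ⟨r, c, τ, h1, h2, h3, h4, h5⟩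
    exact ⟨r, c, τ, h1, h2, h3, h4, fun a b hl => h5 a b ((hPP' _ _).mpr hl)⟩
  · rintro ⟨r, c, τ, h1, h2, h3, h4, h5⟩
    exact ⟨r, c, τ, h1, h2, h3, h4, fun a b hl => h5 a b ((hPP' _ _).mp hl)⟩

lemma shapeAvoiders_congr {s m : ℕ} (P P' : POP s) (hPP' : ∀ a b, P.lt a b ↔ P'.lt a b)
    (lam : Fin m → ℕ) : P.shapeAvoiders lam = P'.shapeAvoiders lam := by
  unfold POP.shapeAvoiders
  refine Nat.card_congr (Equiv.subtypeEquivRight fun σ => ?_)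
  rw [tcontains_congr P P' hPP' lam σ]

lemma shapeAvoiders_nil_zero (p : POP 0) (lam0 : Fin 0 → ℕ) : p.shapeAvoiders lam0 = 0 := by
  unfold POP.shapeAvoiders
  have hcont : ∀ σ : Equiv.Perm (Fin 0), p.TContains lam0 σ := by
    intro σ
    refine ⟨Fin.elim0, Fin.elim0, Equiv.refl _, ?_, ?_, ?_, ?_, ?_⟩
    · intro a b hab
      exact a.elim0
    · intro a b hab
      exact a.elim0
    · intro i
      exact i.elim0
    · intro j
      exact j.elim0
    · intro a
      exact a.elim0
  haveI : IsEmpty {σ : Equiv.Perm (Fin 0) // IsTransversal lam0 σ ∧ ¬ p.TContains lam0 σ} :=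
    ⟨fun x => x.2.2 (hcont x.1)⟩
  exact Nat.card_of_isEmpty

lemma shapeAvoiders_nil_pos {kk : ℕ} (p : POP kk) (hkk : 1 ≤ kk) (lam0 : Fin 0 → ℕ) :
    p.shapeAvoiders lam0 = 1 := by
  unfold POP.shapeAvoiders
  have hall : ∀ σ : Equiv.Perm (Fin 0), IsTransversal lam0 σ ∧ ¬ p.TContains lam0 σ := by
    intro σ
    refine ⟨fun j => j.elim0, ?_⟩
    rintro ⟨r, c, τ, -, -, -, -, -⟩
    exact (c ⟨0, hkk⟩).elim0
  rw [Nat.card_congr (Equiv.subtypeUnivEquiv hall)]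
  simp [Nat.card_eq_fintype_card]

lemma ordSum_lt_zero_congr {l : ℕ} (p p' : POP 0) (q : POP l) (a b : ℕ) :
    (OrdSum p q).lt a b ↔ (OrdSum p' q).lt a b := by
  rw [ordSum_lt_iff, ordSum_lt_iff]
  constructor
  · rintro (⟨h1, h2, h3⟩ | ⟨h1, h2, h3⟩ | ⟨h1, h2, h3, h4⟩)
    · exact absurd h3 (pop_zero_lt_false p _ _)
    · exact Or.inr (Or.inl ⟨h1, h2, h3⟩)
    · omega
  · rintro (⟨h1, h2, h3⟩ | ⟨h1, h2, h3⟩ | ⟨h1, h2, h3, h4⟩)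
    · exact absurd h3 (pop_zero_lt_false p' _ _)
    · exact Or.inr (Or.inl ⟨h1, h2, h3⟩)
    · omega

end EdgeCases
/-- **Theorem 1.1 / 2.2 (Burstein–Han–Kitaev–Zhang).** If `p` is shape-Wilf-equivalent to
`p'`, then the ordinal sums `p ⊕ q` and `p' ⊕ q` are shape-Wilf-equivalent. -/
theorem ordinalSum_shapeWilfEquiv {k k' l : ℕ} (p : POP k) (p' : POP k') (q : POP l)
    (h : ShapeWilfEquiv p p') :
    ShapeWilfEquiv (OrdSum p q) (OrdSum p' q) := by
  classical
  have h0 := h 0 Fin.elim0 (by intro a b hab; exact a.elim0) (by intro i; exact i.elim0)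
  rcases Nat.eq_zero_or_pos k with hk0 | hk
  · subst hk0
    have hk'0 : k' = 0 := by
      by_contra hne
      rw [shapeAvoiders_nil_zero p Fin.elim0,
        shapeAvoiders_nil_pos p' (by omega) Fin.elim0] at h0
      omega
    subst hk'0
    intro n lam hA hpos
    exact shapeAvoiders_congr (OrdSum p q) (OrdSum p' q) (ordSum_lt_zero_congr p p' q) lam
  rcases Nat.eq_zero_or_pos k' with hk'0 | hk'
  · subst hk'0
    rw [shapeAvoiders_nil_pos p hk Fin.elim0, shapeAvoiders_nil_zero p' Fin.elim0] at h0
    omega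
  intro n lam hA hpos
  have key : ∀ σc : Equiv.Perm (Fin n),
      Nat.card {ρ : Equiv.Perm (Fin (mI lam q σc)) //
        IsTransversal (nuF lam q σc) ρ ∧ ¬ p.TContains (nuF lam q σc) ρ} =
      Nat.card {ρ : Equiv.Perm (Fin (mI lam q σc)) //
        IsTransversal (nuF lam q σc) ρ ∧ ¬ p'.TContains (nuF lam q σc) ρ} := by
    intro σc
    exact h (mI lam q σc) (nuF lam q σc) (nu_anti lam q σc hA) (nu_pos lam q σc)
  have hEE : ∀ σc : Equiv.Perm (Fin n), Nonempty
      ({ρ : Equiv.Perm (Fin (mI lam q σc)) //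
        IsTransversal (nuF lam q σc) ρ ∧ ¬ p.TContains (nuF lam q σc) ρ} ≃
       {ρ : Equiv.Perm (Fin (mI lam q σc)) //
        IsTransversal (nuF lam q σc) ρ ∧ ¬ p'.TContains (nuF lam q σc) ρ}) :=
    fun σc => Finite.card_eq.mp (key σc)
  have E := fun σc => (hEE σc).some
  have step : ∀ (kk kk' : ℕ) (pp : POP kk) (pp' : POP kk'), 1 ≤ kk → 1 ≤ kk' →
      ∀ (EEf : ∀ σc : Equiv.Perm (Fin n),
        Equiv.Perm (Fin (mI lam q σc)) → Equiv.Perm (Fin (mI lam q σc))),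
      (∀ σc ρ, IsTransversal (nuF lam q σc) ρ → ¬ pp.TContains (nuF lam q σc) ρ →
        IsTransversal (nuF lam q σc) (EEf σc ρ) ∧ ¬ pp'.TContains (nuF lam q σc) (EEf σc ρ)) →
      ∀ σ : Equiv.Perm (Fin n), IsTransversal lam σ → ¬ (OrdSum pp q).TContains lam σ →
      IsTransversal lam (psiP lam q (cREP lam q σ)
          (EEf (cREP lam q σ) (rhoP lam q (cREP lam q σ) σ)))
      ∧ ¬ (OrdSum pp' q).TContains lam (psiP lam q (cREP lam q σ)
          (EEf (cREP lam q σ) (rhoP lam q (cREP lam q σ) σ))) := by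
    intro kk kk' pp pp' hkk hkk' EEf hgood σ hT hav
    set σc := cREP lam q σ with hσc
    have hrel : REL lam q σc σ := cREP_rel lam q σ
    have hTc : IsTransversal lam σc := hrel.symm.transversal hT
    have h1 : IsTransversal (nuF lam q σc) (rhoP lam q σc σ) :=
      rhoP_transversal lam q σc hA hrel
    have h2 : ¬ pp.TContains (nuF lam q σc) (rhoP lam q σc σ) := by
      rw [← bcontains_iff_int lam q σc hA pp hrel, ← tcontains_iff_bcontains hA pp hkk σ]
      exact hav
    have hEg := hgood σc _ h1 h2
    have hrel' : REL lam q σc (psiP lam q σc (EEf σc (rhoP lam q σc σ))) :=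
      psi_rel lam q σc hA _ hEg.1
    refine ⟨hrel'.transversal hTc, ?_⟩
    rw [tcontains_iff_bcontains hA pp' hkk', bcontains_iff_int lam q σc hA pp' hrel',
      rho_psi lam q σc hA _ hEg.1]
    exact hEg.2
  have roundtrip : ∀ (kk kk' : ℕ) (pp : POP kk) (pp' : POP kk'), 1 ≤ kk →
      ∀ (EEf EEf' : ∀ σc : Equiv.Perm (Fin n),
        Equiv.Perm (Fin (mI lam q σc)) → Equiv.Perm (Fin (mI lam q σc))),
      (∀ σc ρ, IsTransversal (nuF lam q σc) ρ → ¬ pp.TContains (nuF lam q σc) ρ →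
        IsTransversal (nuF lam q σc) (EEf σc ρ) ∧ ¬ pp'.TContains (nuF lam q σc) (EEf σc ρ)) →
      (∀ σc ρ, IsTransversal (nuF lam q σc) ρ → ¬ pp.TContains (nuF lam q σc) ρ →
        EEf' σc (EEf σc ρ) = ρ) →
      ∀ σ : Equiv.Perm (Fin n), IsTransversal lam σ → ¬ (OrdSum pp q).TContains lam σ →
      psiP lam q
        (cREP lam q (psiP lam q (cREP lam q σ)
          (EEf (cREP lam q σ) (rhoP lam q (cREP lam q σ) σ))))
        (EEf' (cREP lam q (psiP lam q (cREP lam q σ)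
            (EEf (cREP lam q σ) (rhoP lam q (cREP lam q σ) σ))))
          (rhoP lam q
            (cREP lam q (psiP lam q (cREP lam q σ)
              (EEf (cREP lam q σ) (rhoP lam q (cREP lam q σ) σ))))
            (psiP lam q (cREP lam q σ)
              (EEf (cREP lam q σ) (rhoP lam q (cREP lam q σ) σ))))) = σ := by
    intro kk kk' pp pp' hkk EEf EEf' hgood hinv σ hT hav
    set σc := cREP lam q σ with hσc
    have hrel : REL lam q σc σ := cREP_rel lam q σ
    have h1 : IsTransversal (nuF lam q σc) (rhoP lam q σc σ) :=
      rhoP_transversal lam q σc hA hrel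
    have h2 : ¬ pp.TContains (nuF lam q σc) (rhoP lam q σc σ) := by
      rw [← bcontains_iff_int lam q σc hA pp hrel, ← tcontains_iff_bcontains hA pp hkk σ]
      exact hav
    have hEg := hgood σc _ h1 h2
    have hrel' : REL lam q σc (psiP lam q σc (EEf σc (rhoP lam q σc σ))) :=
      psi_rel lam q σc hA _ hEg.1
    have hc : cREP lam q (psiP lam q σc (EEf σc (rhoP lam q σc σ))) = σc := by
      rw [← cREP_eq_of_rel lam q hrel', hσc]
      exact cREP_idem lam q σ
    rw [hc, rho_psi lam q σc hA _ hEg.1, hinv σc _ h1 h2]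
    exact psi_rho lam q σc hrel
  show (OrdSum p q).shapeAvoiders lam = (OrdSum p' q).shapeAvoiders lam
  unfold POP.shapeAvoiders
  refine Nat.card_congr ?_
  refine
    { toFun := fun x => ⟨psiP lam q (cREP lam q x.1)
        (EEfun lam q p p' E (cREP lam q x.1) (rhoP lam q (cREP lam q x.1) x.1)),
        step k k' p p' hk hk' (EEfun lam q p p' E)
          (fun σc ρ ha hb => EEfun_good lam q p p' E σc ρ ha hb) x.1 x.2.1 x.2.2⟩,
      invFun := fun y => ⟨psiP lam q (cREP lam q y.1)
        (EEfun lam q p' p (fun t => (E t).symm) (cREP lam q y.1)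
          (rhoP lam q (cREP lam q y.1) y.1)),
        step k' k p' p hk' hk (EEfun lam q p' p (fun t => (E t).symm))
          (fun σc ρ ha hb => EEfun_good lam q p' p (fun t => (E t).symm) σc ρ ha hb)
          y.1 y.2.1 y.2.2⟩,
      left_inv := ?_, right_inv := ?_ }
  · intro x
    refine Subtype.ext ?_
    exact roundtrip k k' p p' hk (EEfun lam q p p' E)
      (EEfun lam q p' p (fun t => (E t).symm))
      (fun σc ρ ha hb => EEfun_good lam q p p' E σc ρ ha hb)
      (fun σc ρ ha hb => EEfun_inv lam q p p' E σc ρ ha hb) x.1 x.2.1 x.2.2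
  · intro y
    refine Subtype.ext ?_
    exact roundtrip k' k p' p hk' (EEfun lam q p' p (fun t => (E t).symm))
      (EEfun lam q p p' E)
      (fun σc ρ ha hb => EEfun_good lam q p' p (fun t => (E t).symm) σc ρ ha hb)
      (fun σc ρ ha hb => EEfun_inv' lam q p p' E σc ρ ha hb) y.1 y.2.1 y.2.2
end

section
/- Let p, p' be POPs of size k whose sets of isolated labels are both equal to I = {i₁ < i₂ < ⋯ < i_s}, and suppose that in both p and p' every label in {1,…,i₁−1} is strictly below every label in {i₁,…,k}∖I. Let I_p, I_{p'} denote the restrictions of p, p' to {1,…,i₁−1} (POPs of size i₁−1), and let J_p, J_{p'} denote the restrictions of p, p' to {i₁,…,k}∖I. If I_p and I_{p'} are shape-Wilf-equivalent and J_p = J_{p'}, then p and p' are Wilf-equivalent. -/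
noncomputable section PopAuxSec
open Finset

namespace PopAux

variable {n t : ℕ}

/-- Witness predicate: cell `(i,j)` sees, strictly above-right, a placement of the
`t` slots with points (given by `P`) at the `J` slots forming the `QJ` pattern. -/
def Wit (isJ : Fin t → Prop) (QJ : Fin t → Fin t → Prop)
    (P : Fin n → Fin n → Prop) (i j : Fin n) : Prop :=
  ∃ g v : Fin t → Fin n, StrictMono g ∧ (∀ b, j < g b) ∧
    (∀ b, isJ b → P (v b) (g b) ∧ i < v b) ∧ (∀ a b, QJ a b → v a < v b)

variable (isJ : Fin t → Prop) (QJ : Fin t → Fin t → Prop)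

def Pts (π : Equiv.Perm (Fin n)) : Fin n → Fin n → Prop := fun r c => π c = r
def MemS (S : Finset (Fin n × Fin n)) : Fin n → Fin n → Prop := fun r c => (r, c) ∈ S

def dark (π : Equiv.Perm (Fin n)) : Finset (Fin n × Fin n) :=
  @Finset.filter _ (fun rc => π rc.2 = rc.1 ∧ ¬ Wit isJ QJ (Pts π) rc.1 rc.2)
    (Classical.decPred _) Finset.univ

def fR (S : Finset (Fin n × Fin n)) : Finset (Fin n) := univ \ S.image Prod.fst
def fC (S : Finset (Fin n × Fin n)) : Finset (Fin n) := univ \ S.image Prod.snd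
def w (S : Finset (Fin n × Fin n)) : ℕ := (fC S).card

lemma w_le (S : Finset (Fin n × Fin n)) : w S ≤ n := by
  simpa [w] using Finset.card_le_univ (fC S)

def ecol (S : Finset (Fin n × Fin n)) : Fin (w S) → Fin n :=
  fun j => ((fC S).orderIsoOfFin rfl j : Fin n)

def erow (S : Finset (Fin n × Fin n)) : Fin (w S) → Fin n :=
  if h : (fR S).card = w S then fun i => ((fR S).orderIsoOfFin h i : Fin n)
  else fun i => Fin.castLE (w_le S) i

def lam (S : Finset (Fin n × Fin n)) : Fin (w S) → ℕ := fun i =>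
  (@Finset.filter _ (fun j : Fin (w S) => Wit isJ QJ (MemS S) (erow S i) (ecol S j))
    (Classical.decPred _) univ).card

def trv (S : Finset (Fin n × Fin n)) (π : Equiv.Perm (Fin n)) : Fin (w S) → Fin (w S) :=
  fun j =>
    if h : (fR S).card = w S then
      if hm : π (ecol S j) ∈ fR S then ((fR S).orderIsoOfFin h).symm ⟨_, hm⟩ else j
    else j

def Valid (S : Finset (Fin n × Fin n)) : Prop :=
  (∀ a ∈ S, ∀ b ∈ S, (Prod.fst a = Prod.fst b ↔ a.2 = b.2)) ∧
  (∀ a ∈ S, ¬ Wit isJ QJ (MemS S) a.1 a.2) ∧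
  (∀ r ∈ fR S, ∃ c ∈ fC S, Wit isJ QJ (MemS S) r c) ∧
  (fR S).card = w S

variable {isJ QJ}

lemma wit_mono {P : Fin n → Fin n → Prop} {i j i' j' : Fin n}
    (h : Wit isJ QJ P i j) (hi : i' ≤ i) (hj : j' ≤ j) : Wit isJ QJ P i' j' := by
  obtain ⟨g, v, hg, hgt, hJ, hQ⟩ := h
  exact ⟨g, v, hg, fun b => lt_of_le_of_lt hj (hgt b),
    fun b hb => ⟨(hJ b hb).1, lt_of_le_of_lt hi (hJ b hb).2⟩, hQ⟩

lemma mem_dark_iff {π : Equiv.Perm (Fin n)} {r c : Fin n} :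
    (r, c) ∈ dark isJ QJ π ↔ π c = r ∧ ¬ Wit isJ QJ (Pts π) r c := by
  unfold dark
  rw [@Finset.mem_filter _ _ (Classical.decPred _)]
  simp

lemma witS_to_witP {S : Finset (Fin n × Fin n)} {π : Equiv.Perm (Fin n)}
    (H1 : ∀ a ∈ S, π a.2 = a.1) {i j : Fin n}
    (h : Wit isJ QJ (MemS S) i j) : Wit isJ QJ (Pts π) i j := by
  obtain ⟨g, v, hg, hgt, hJ, hQ⟩ := h
  exact ⟨g, v, hg, hgt, fun b hb => ⟨H1 _ (hJ b hb).1, (hJ b hb).2⟩, hQ⟩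

lemma witP_to_witS {S : Finset (Fin n × Fin n)} {π : Equiv.Perm (Fin n)}
    (H2 : ∀ c, (π c, c) ∉ S → Wit isJ QJ (MemS S) (π c) c) {i j : Fin n}
    (h : Wit isJ QJ (Pts π) i j) : Wit isJ QJ (MemS S) i j := by
  obtain ⟨g, v, hg, hgt, hJ, hQ⟩ := h
  by_cases hall : ∀ b, isJ b → (v b, g b) ∈ S
  · exact ⟨g, v, hg, hgt, fun b hb => ⟨hall b hb, (hJ b hb).2⟩, hQ⟩
  · push_neg at hall
    obtain ⟨b₀, hb₀, hmem⟩ := hall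
    have hv : π (g b₀) = v b₀ := (hJ b₀ hb₀).1
    have : Wit isJ QJ (MemS S) (v b₀) (g b₀) := by
      have := H2 (g b₀) (by rw [hv]; exact hmem)
      rwa [hv] at this
    exact wit_mono this (le_of_lt (hJ b₀ hb₀).2) (le_of_lt (hgt b₀))

/-- Stability: a witness for `π` yields a witness using only dark points. -/
lemma witP_to_witDark {π : Equiv.Perm (Fin n)} {i j : Fin n}
    (h : Wit isJ QJ (Pts π) i j) : Wit isJ QJ (MemS (dark isJ QJ π)) i j := by
  suffices H : ∀ d : ℕ, ∀ i j : Fin n, n - (j : ℕ) ≤ d → Wit isJ QJ (Pts π) i j →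
      Wit isJ QJ (MemS (dark isJ QJ π)) i j from H n i j (Nat.sub_le _ _) h
  intro d
  induction d with
  | zero => intro i j hj _; exact absurd hj (by have := j.isLt; omega)
  | succ d ih =>
    intro i j _ h
    obtain ⟨g, v, hg, hgt, hJ, hQ⟩ := h
    by_cases hall : ∀ b, isJ b → (v b, g b) ∈ dark isJ QJ π
    · exact ⟨g, v, hg, hgt, fun b hb => ⟨hall b hb, (hJ b hb).2⟩, hQ⟩
    · push_neg at hall
      obtain ⟨b₀, hb₀, hmem⟩ := hall
      have hv : π (g b₀) = v b₀ := (hJ b₀ hb₀).1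
      have hwit : Wit isJ QJ (Pts π) (v b₀) (g b₀) := by
        rw [mem_dark_iff] at hmem
        push_neg at hmem
        exact hmem hv
      have hd : n - ((g b₀ : ℕ)) ≤ d := by
        have := hgt b₀
        have hjn : (j : ℕ) < n := j.isLt
        omega
      have := ih (v b₀) (g b₀) hd hwit
      exact wit_mono this (le_of_lt (hJ b₀ hb₀).2) (le_of_lt (hgt b₀))

/-- A downward-closed subset of `Fin q` is an initial segment. -/
lemma mem_lower_iff_lt_card {q : ℕ} {T : Finset (Fin q)}
    (h : ∀ a b : Fin q, b ≤ a → a ∈ T → b ∈ T) (j : Fin q) :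
    j ∈ T ↔ (j : ℕ) < T.card := by
  constructor
  · intro hj
    have hsub : Finset.Iic j ⊆ T := fun a ha => h j a (Finset.mem_Iic.mp ha) hj
    have := Finset.card_le_card hsub
    rw [Fin.card_Iic] at this
    omega
  · intro hj
    by_contra hmem
    have hsub : T ⊆ Finset.Iio j := by
      intro a ha
      rw [Finset.mem_Iio]
      by_contra hlt
      exact hmem (h a j (not_lt.mp hlt) ha)
    have := Finset.card_le_card hsub
    rw [Fin.card_Iio] at this
    omega

section Board

variable {S : Finset (Fin n × Fin n)}

lemma ecol_strictMono : StrictMono (ecol S) := fun a b hab => by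
  simpa [ecol] using (((fC S).orderIsoOfFin rfl).strictMono hab)

lemma ecol_mem (j : Fin (w S)) : ecol S j ∈ fC S := ((fC S).orderIsoOfFin rfl j).2

lemma ecol_symm_apply {c : Fin n} (hc : c ∈ fC S) :
    ecol S (((fC S).orderIsoOfFin rfl).symm ⟨c, hc⟩) = c := by
  simp [ecol]

lemma erow_eq (hR : (fR S).card = w S) (i : Fin (w S)) :
    erow S i = ((fR S).orderIsoOfFin hR i : Fin n) := by
  rw [erow, dif_pos hR]

lemma erow_strictMono (hR : (fR S).card = w S) : StrictMono (erow S) := fun a b hab => by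
  rw [erow_eq hR, erow_eq hR]
  exact_mod_cast ((fR S).orderIsoOfFin hR).strictMono hab

lemma erow_mem (hR : (fR S).card = w S) (i : Fin (w S)) : erow S i ∈ fR S := by
  rw [erow_eq hR]; exact ((fR S).orderIsoOfFin hR i).2

lemma erow_symm_apply (hR : (fR S).card = w S) {r : Fin n} (hr : r ∈ fR S) :
    erow S (((fR S).orderIsoOfFin hR).symm ⟨r, hr⟩) = r := by
  rw [erow_eq hR]; simp

lemma erow_rank (hR : (fR S).card = w S) (i : Fin (w S)) :
    ((fR S).orderIsoOfFin hR).symm ⟨erow S i, erow_mem hR i⟩ = i := by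
  have : (⟨erow S i, erow_mem hR i⟩ : {x // x ∈ fR S}) = (fR S).orderIsoOfFin hR i := by
    apply Subtype.ext
    exact erow_eq hR i
  rw [this, OrderIso.symm_apply_apply]

/-- Cell membership in the board. -/
lemma cell_iff (hV : Valid isJ QJ S) (i : Fin (w S)) (j : Fin (w S)) :
    (j : ℕ) < lam isJ QJ S i ↔ Wit isJ QJ (MemS S) (erow S i) (ecol S j) := by
  have hlow : ∀ a b : Fin (w S), b ≤ a →
      a ∈ (@Finset.filter _ (fun j : Fin (w S) => Wit isJ QJ (MemS S) (erow S i) (ecol S j))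
        (Classical.decPred _) univ) →
      b ∈ (@Finset.filter _ (fun j : Fin (w S) => Wit isJ QJ (MemS S) (erow S i) (ecol S j))
        (Classical.decPred _) univ) := by
    intro a b hba ha
    rw [@Finset.mem_filter _ _ (Classical.decPred _)] at ha ⊢
    exact ⟨Finset.mem_univ _, wit_mono ha.2 le_rfl (ecol_strictMono.monotone hba)⟩
  have := mem_lower_iff_lt_card hlow j
  rw [@Finset.mem_filter _ _ (Classical.decPred _)] at this
  rw [lam, ← this]
  simp

lemma lam_antitone (hV : Valid isJ QJ S) : Antitone (lam isJ QJ S) := by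
  intro a b hab
  apply Finset.card_le_card
  intro j hj
  rw [@Finset.mem_filter _ _ (Classical.decPred _)] at hj ⊢
  refine ⟨Finset.mem_univ _, wit_mono hj.2 ?_ le_rfl⟩
  exact (erow_strictMono hV.2.2.2).monotone hab

lemma lam_pos (hV : Valid isJ QJ S) (i : Fin (w S)) : 0 < lam isJ QJ S i := by
  obtain ⟨c, hc, hwit⟩ := hV.2.2.1 (erow S i) (erow_mem hV.2.2.2 i)
  rw [lam, Finset.card_pos]
  refine ⟨((fC S).orderIsoOfFin rfl).symm ⟨c, hc⟩, ?_⟩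
  exact (@Finset.mem_filter _ _ (Classical.decPred _) _ _).mpr
    ⟨Finset.mem_univ _, by rwa [ecol_symm_apply hc]⟩

end Board

section DarkValid

variable {π : Equiv.Perm (Fin n)} {S : Finset (Fin n × Fin n)}

/-- Hypothesis H1: all points of `S` are points of `π`. -/
def H1 (S : Finset (Fin n × Fin n)) (π : Equiv.Perm (Fin n)) : Prop := ∀ a ∈ S, π a.2 = a.1

/-- Hypothesis H2: points of `π` outside of `S` sit in white cells. -/
def H2 (isJ : Fin t → Prop) (QJ : Fin t → Fin t → Prop)
    (S : Finset (Fin n × Fin n)) (π : Equiv.Perm (Fin n)) : Prop :=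
  ∀ c, (π c, c) ∉ S → Wit isJ QJ (MemS S) (π c) c

lemma h1_dark : H1 (dark isJ QJ π) π := fun a ha => by
  rw [show a = (a.1, a.2) from rfl, mem_dark_iff] at ha
  exact ha.1

lemma h2_dark : H2 isJ QJ (dark isJ QJ π) π := by
  intro c hc
  rw [mem_dark_iff] at hc
  push_neg at hc
  exact witP_to_witDark (hc rfl)

lemma mem_cols_iff {c : Fin n} (h1 : H1 S π) : c ∉ fC S ↔ (π c, c) ∈ S := by
  constructor
  · intro hc
    rw [fC, Finset.mem_sdiff] at hc
    push_neg at hc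
    obtain ⟨a, ha, hac⟩ := Finset.mem_image.mp (hc (Finset.mem_univ c))
    have := h1 a ha
    rw [hac] at this
    have haeq : a = (π c, c) := Prod.ext this.symm hac
    rwa [haeq] at ha
  · intro hm hc
    rw [fC, Finset.mem_sdiff] at hc
    exact hc.2 (Finset.mem_image.mpr ⟨_, hm, rfl⟩)

lemma mem_rows_iff {r : Fin n} (h1 : H1 S π) : r ∉ fR S ↔ (r, π.symm r) ∈ S := by
  constructor
  · intro hr
    rw [fR, Finset.mem_sdiff] at hr
    push_neg at hr
    obtain ⟨a, ha, har⟩ := Finset.mem_image.mp (hr (Finset.mem_univ r))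
    have hpt := h1 a ha
    have : a = (r, π.symm r) := by
      rw [← har]
      have : π.symm a.1 = a.2 := by rw [← hpt]; simp
      exact Prod.ext rfl (by rw [← this, har])
    rwa [this] at ha
  · intro hm hr
    rw [fR, Finset.mem_sdiff] at hr
    exact hr.2 (Finset.mem_image.mpr ⟨_, hm, rfl⟩)

/-- Under H1 and H2, whiteness for `π` and for `S` agree. -/
lemma witP_iff_witS (h1 : H1 S π) (h2 : H2 isJ QJ S π) {i j : Fin n} :
    Wit isJ QJ (Pts π) i j ↔ Wit isJ QJ (MemS S) i j :=
  ⟨witP_to_witS h2, witS_to_witP h1⟩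

/-- Under H1 and H2, the dark set of `π` is exactly `S`. -/
lemma dark_eq (hV : Valid isJ QJ S) (h1 : H1 S π) (h2 : H2 isJ QJ S π) :
    dark isJ QJ π = S := by
  ext ⟨r, c⟩
  rw [mem_dark_iff]
  constructor
  · rintro ⟨hpt, hw⟩
    by_contra hm
    rw [← hpt] at hm
    have := witS_to_witP h1 (h2 c hm)
    rw [hpt] at this
    exact hw this
  · intro hm
    refine ⟨h1 _ hm, fun hw => hV.2.1 _ hm (witP_to_witS h2 hw)⟩

lemma valid_dark : Valid isJ QJ (dark isJ QJ π) := by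
  have hfunc : ∀ a ∈ dark isJ QJ π, ∀ b ∈ dark isJ QJ π, (a.1 = b.1 ↔ a.2 = b.2) := by
    intro a ha b hb
    have hpa := h1_dark a ha; have hpb := h1_dark b hb
    constructor
    · intro h; rw [← hpa, ← hpb] at h; exact π.injective h
    · intro h; rw [← hpa, ← hpb, h]
  have hcards : (dark isJ QJ π).card = ((dark isJ QJ π).image Prod.fst).card ∧
      (dark isJ QJ π).card = ((dark isJ QJ π).image Prod.snd).card := by
    constructor
    · rw [Finset.card_image_of_injOn]
      intro a ha b hb hab
      exact Prod.ext hab ((hfunc a ha b hb).mp hab)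
    · rw [Finset.card_image_of_injOn]
      intro a ha b hb hab
      exact Prod.ext ((hfunc a ha b hb).mpr hab) hab
  have hR : (fR (dark isJ QJ π)).card = w (dark isJ QJ π) := by
    rw [fR, w, fC, Finset.card_sdiff_of_subset (Finset.subset_univ _),
      Finset.card_sdiff_of_subset (Finset.subset_univ _), ← hcards.1, ← hcards.2]
  refine ⟨hfunc, ?_, ?_, hR⟩
  · rintro ⟨r, c⟩ ha
    rw [mem_dark_iff] at ha
    intro hw
    exact ha.2 (witS_to_witP h1_dark hw)
  · intro r hr
    rw [fR, Finset.mem_sdiff] at hr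
    set c := π.symm r with hcdef
    have hpc : π c = r := by simp [hcdef]
    have hpt : (π c, c) ∉ dark isJ QJ π := by
      intro hm
      exact hr.2 (Finset.mem_image.mpr ⟨_, hm, by simp [hpc]⟩)
    have hwit : Wit isJ QJ (Pts π) (π c) c := by
      rw [mem_dark_iff] at hpt
      push_neg at hpt
      exact hpt rfl
    have hwS := witP_to_witDark hwit
    refine ⟨c, ?_, by rwa [hpc] at hwS⟩
    rw [fC, Finset.mem_sdiff]
    refine ⟨Finset.mem_univ _, fun hcc => ?_⟩
    obtain ⟨a, ha, hac⟩ := Finset.mem_image.mp hcc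
    have hpa := h1_dark a ha
    have haeq : a = (π c, c) := Prod.ext (by rw [← hpa, hac]) hac
    rw [haeq] at ha
    exact hpt ha

end DarkValid

/-- Abstract occurrence: an `m`-part occurrence with pattern `QA`, all strictly
below-left of a `t`-slot witness configuration. -/
def OccD (isJ : Fin t → Prop) (QJ : Fin t → Fin t → Prop) {m : ℕ}
    (QA : Fin m → Fin m → Prop) (π : Equiv.Perm (Fin n)) : Prop :=
  ∃ (f : Fin m → Fin n) (g : Fin t → Fin n), StrictMono f ∧ StrictMono g ∧
    (∀ a b, f a < g b) ∧ (∀ a b, QA a b → π (f a) < π (f b)) ∧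
    (∀ (a : Fin m) (b : Fin t), isJ b → π (f a) < π (g b)) ∧
    (∀ a b, QJ a b → π (g a) < π (g b))

/-- Abstract board containment. -/
def TCD {q m : ℕ} (QA : Fin m → Fin m → Prop) (lam : Fin q → ℕ) (σ : Fin q → Fin q) : Prop :=
  ∃ (r c : Fin m → Fin q) (τ : Equiv.Perm (Fin m)), StrictMono r ∧ StrictMono c ∧
    (∀ i j, ((c j : ℕ)) < lam (r i)) ∧ (∀ j, σ (c j) = r (τ j)) ∧
    ∀ a b, QA a b → τ a < τ b

section Translate

variable {π : Equiv.Perm (Fin n)} {S : Finset (Fin n × Fin n)}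

lemma ecol_rank (j : Fin (w S)) :
    ((fC S).orderIsoOfFin rfl).symm ⟨ecol S j, ecol_mem j⟩ = j := by
  have : (⟨ecol S j, ecol_mem j⟩ : {x // x ∈ fC S}) = (fC S).orderIsoOfFin rfl j :=
    Subtype.ext rfl
  rw [this]; exact OrderIso.symm_apply_apply _ _

lemma col_pt_not_mem (h1 : H1 S π) (j : Fin (w S)) : (π (ecol S j), ecol S j) ∉ S := by
  intro hmem
  exact absurd (ecol_mem j) (fun hc => ((mem_cols_iff h1).mpr hmem) hc)

lemma col_pt_free (h1 : H1 S π) (j : Fin (w S)) : π (ecol S j) ∈ fR S := by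
  by_contra hrr
  have hmem := (mem_rows_iff h1).mp hrr
  rw [Equiv.symm_apply_apply] at hmem
  exact col_pt_not_mem h1 j hmem

lemma trv_eq (hR : (fR S).card = w S) {j : Fin (w S)} (hm : π (ecol S j) ∈ fR S) :
    trv S π j = ((fR S).orderIsoOfFin hR).symm ⟨π (ecol S j), hm⟩ := by
  rw [trv, dif_pos hR, dif_pos hm]

lemma trv_injective (hV : Valid isJ QJ S) (h1 : H1 S π) : Function.Injective (trv S π) := by
  intro j₁ j₂ h
  rw [trv_eq hV.2.2.2 (col_pt_free h1 j₁), trv_eq hV.2.2.2 (col_pt_free h1 j₂)] at h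
  have := congrArg (fun x => (((fR S).orderIsoOfFin hV.2.2.2) x : Fin n)) h
  simp only [OrderIso.apply_symm_apply] at this
  exact ecol_strictMono.injective (π.injective this)

lemma trv_transversal (hV : Valid isJ QJ S) (h1 : H1 S π) (h2 : H2 isJ QJ S π)
    (j : Fin (w S)) : (j : ℕ) < lam isJ QJ S (trv S π j) := by
  rw [cell_iff hV, trv_eq hV.2.2.2 (col_pt_free h1 j),
    erow_symm_apply hV.2.2.2 (col_pt_free h1 j)]
  exact h2 _ (col_pt_not_mem h1 j)

/-- The key translation: occurrences of the pattern correspond to board containments. -/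
lemma occD_iff_tcD {m : ℕ} (QA : Fin m → Fin m → Prop) (hm : 0 < m)
    (hQJ : ∀ a b, QJ a b → isJ a ∧ isJ b)
    (hV : Valid isJ QJ S) (h1 : H1 S π) (h2 : H2 isJ QJ S π) :
    OccD isJ QJ QA π ↔ TCD QA (lam isJ QJ S) (trv S π) := by
  have hR := hV.2.2.2
  constructor
  · rintro ⟨f, g, hf, hg, hfg, hQA, hAJ, hQJg⟩
    set V : Fin m → Fin n := fun a => π (f a) with hVdef
    have hwit : ∀ a a' : Fin m, Wit isJ QJ (MemS S) (V a) (f a') := by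
      intro a a'
      apply witP_to_witS h2
      exact ⟨g, fun b => π (g b), hg, fun b => hfg a' b,
        fun b hb => ⟨rfl, hAJ a b hb⟩, fun b b' hq => hQJg _ _ hq⟩
    have hptS : ∀ a, (V a, f a) ∉ S := fun a hmem => hV.2.1 _ hmem (hwit a a)
    have hcf : ∀ a, f a ∈ fC S := by
      intro a; by_contra hc; exact hptS a ((mem_cols_iff h1).mp hc)
    have hrf : ∀ a, V a ∈ fR S := by
      intro a; by_contra hrr
      have hmem := (mem_rows_iff h1).mp hrr
      have hsymm : π.symm (V a) = f a := by rw [hVdef]; simp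
      rw [hsymm] at hmem
      exact hptS a hmem
    have hVinj : Function.Injective V := fun a b hab =>
      hf.injective (π.injective hab)
    set τ₀ := Tuple.sort V with hτ₀
    have hVs : StrictMono (V ∘ τ₀) :=
      (Tuple.monotone_sort V).strictMono_of_injective (hVinj.comp τ₀.injective)
    refine ⟨fun i => ((fR S).orderIsoOfFin hR).symm ⟨V (τ₀ i), hrf (τ₀ i)⟩,
      fun j => ((fC S).orderIsoOfFin rfl).symm ⟨f j, hcf j⟩, τ₀.symm, ?_, ?_, ?_, ?_, ?_⟩
    · intro a b hab
      exact (((fR S).orderIsoOfFin hR).symm.lt_iff_lt).mpr (Subtype.mk_lt_mk.mpr (hVs hab))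
    · intro a b hab
      exact (((fC S).orderIsoOfFin rfl).symm.lt_iff_lt).mpr (Subtype.mk_lt_mk.mpr (hf hab))
    · intro i j
      exact (cell_iff hV _ _).mpr
        (by simpa only [erow_symm_apply hR, ecol_symm_apply] using hwit (τ₀ i) j)
    · intro j
      have hcolj : ecol S (((fC S).orderIsoOfFin rfl).symm ⟨f j, hcf j⟩) = f j :=
        ecol_symm_apply (hcf j)
      have hmemr : π (ecol S (((fC S).orderIsoOfFin rfl).symm ⟨f j, hcf j⟩)) ∈ fR S := by
        rw [hcolj]; exact hrf j
      rw [trv_eq hR hmemr]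
      apply congrArg
      apply Subtype.ext
      simp only
      rw [hcolj]
      show π (f j) = V (τ₀ (τ₀.symm j))
      rw [Equiv.apply_symm_apply]
    · intro a b hab
      have h1lt : V a < V b := hQA a b hab
      have ha' : V (τ₀ (τ₀.symm a)) < V (τ₀ (τ₀.symm b)) := by
        rwa [Equiv.apply_symm_apply, Equiv.apply_symm_apply]
      exact hVs.lt_iff_lt.mp ha'
  · rintro ⟨r, c, τ, hr, hc, hcell, hpt, hQA⟩
    set f : Fin m → Fin n := fun j => ecol S (c j) with hfdef
    have hf : StrictMono f := fun a b hab => ecol_strictMono (hc hab)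
    have hkey : ∀ j, π (f j) = erow S (r (τ j)) := by
      intro j
      have := hpt j
      rw [trv_eq hR (col_pt_free h1 (c j))] at this
      have := congrArg (fun x => (((fR S).orderIsoOfFin hR) x : Fin n)) this
      simp only [OrderIso.apply_symm_apply] at this
      rw [erow_eq hR]
      exact this
    set L : Fin m := ⟨m - 1, by omega⟩ with hL
    have hLe : ∀ a : Fin m, a ≤ L := by
      intro a; rw [Fin.le_def]; simp [hL]; omega
    have hVle : ∀ a, π (f a) ≤ erow S (r L) := by
      intro a
      rw [hkey a]
      exact (erow_strictMono hR).monotone ((hr.monotone) (hLe (τ a)))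
    have hwit₀ : Wit isJ QJ (Pts π) (erow S (r L)) (f L) := by
      apply witS_to_witP h1
      have := (cell_iff hV (r L) (c L)).mp (hcell L L)
      exact this
    obtain ⟨g, v, hg, hgt, hJv, hQv⟩ := hwit₀
    refine ⟨f, g, hf, hg, ?_, ?_, ?_, ?_⟩
    · intro a b
      exact lt_of_le_of_lt (hf.monotone (hLe a)) (hgt b)
    · intro a b hab
      rw [hkey a, hkey b]
      exact erow_strictMono hR (hr (hQA a b hab))
    · intro a b hb
      refine lt_of_le_of_lt (hVle a) ?_
      have hpb : π (g b) = v b := (hJv b hb).1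
      rw [hpb]
      exact (hJv b hb).2
    · intro a b hab
      have hJa := (hQJ a b hab).1
      have hJb := (hQJ a b hab).2
      have hpa : π (g a) = v a := (hJv a hJa).1
      have hpb : π (g b) = v b := (hJv b hJb).1
      rw [hpa, hpb]
      exact hQv a b hab

end Translate

section Recon

variable {S : Finset (Fin n × Fin n)}

def recon (S : Finset (Fin n × Fin n)) (σ : Equiv.Perm (Fin (w S))) : Fin n → Fin n :=
  fun c =>
    if hc : c ∈ fC S then erow S (σ (((fC S).orderIsoOfFin rfl).symm ⟨c, hc⟩))
    else if h : ∃ r, (r, c) ∈ S then h.choose else c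

lemma recon_free {σ : Equiv.Perm (Fin (w S))} {c : Fin n} (hc : c ∈ fC S) :
    recon S σ c = erow S (σ (((fC S).orderIsoOfFin rfl).symm ⟨c, hc⟩)) := by
  rw [recon, dif_pos hc]

lemma exists_row_of_not_free {c : Fin n} (hc : c ∉ fC S) : ∃ r, (r, c) ∈ S := by
  rw [fC, Finset.mem_sdiff] at hc
  push_neg at hc
  obtain ⟨a, ha, hac⟩ := Finset.mem_image.mp (hc (Finset.mem_univ c))
  exact ⟨a.1, by rwa [← hac, Prod.mk.eta]⟩

lemma recon_mem {σ : Equiv.Perm (Fin (w S))} {c : Fin n} (hc : c ∉ fC S) :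
    (recon S σ c, c) ∈ S := by
  rw [recon, dif_neg hc, dif_pos (exists_row_of_not_free hc)]
  exact (exists_row_of_not_free hc).choose_spec

lemma recon_dark (hV : Valid isJ QJ S) {σ : Equiv.Perm (Fin (w S))} :
    ∀ a ∈ S, recon S σ a.2 = a.1 := by
  intro a ha
  have hc : a.2 ∉ fC S := by
    rw [fC, Finset.mem_sdiff]
    push_neg
    intro _
    exact Finset.mem_image.mpr ⟨a, ha, rfl⟩
  have hmem := recon_mem (σ := σ) hc
  exact ((hV.1 _ hmem _ ha).mpr rfl)

lemma recon_injective (hV : Valid isJ QJ S) (σ : Equiv.Perm (Fin (w S))) :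
    Function.Injective (recon S σ) := by
  have hR := hV.2.2.2
  intro c₁ c₂ h
  by_cases hc₁ : c₁ ∈ fC S <;> by_cases hc₂ : c₂ ∈ fC S
  · rw [recon_free hc₁, recon_free hc₂] at h
    have := σ.injective ((erow_strictMono hR).injective h)
    have := congrArg (fun x => (((fC S).orderIsoOfFin rfl) x : Fin n)) this
    simpa using this
  · exfalso
    have h1 : recon S σ c₁ ∈ fR S := by rw [recon_free hc₁]; exact erow_mem hR _
    have h2 := recon_mem (σ := σ) hc₂
    rw [fR, Finset.mem_sdiff] at h1
    exact h1.2 (Finset.mem_image.mpr ⟨(recon S σ c₂, c₂), h2, h.symm⟩)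
  · exfalso
    have h1 : recon S σ c₂ ∈ fR S := by rw [recon_free hc₂]; exact erow_mem hR _
    have h2 := recon_mem (σ := σ) hc₁
    rw [fR, Finset.mem_sdiff] at h1
    exact h1.2 (Finset.mem_image.mpr ⟨(recon S σ c₁, c₁), h2, h⟩)
  · have h1 := recon_mem (σ := σ) hc₁
    have h2 := recon_mem (σ := σ) hc₂
    rw [h] at h1
    exact ((hV.1 _ h1 _ h2).mp rfl)

def reconPerm (hV : Valid isJ QJ S) (σ : Equiv.Perm (Fin (w S))) : Equiv.Perm (Fin n) :=
  Equiv.ofBijective (recon S σ)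
    (Finite.injective_iff_bijective.mp (recon_injective hV σ))

lemma reconPerm_apply (hV : Valid isJ QJ S) (σ : Equiv.Perm (Fin (w S))) (c : Fin n) :
    reconPerm hV σ c = recon S σ c := rfl

lemma reconPerm_h1 (hV : Valid isJ QJ S) (σ : Equiv.Perm (Fin (w S))) :
    H1 S (reconPerm hV σ) := fun a ha => recon_dark hV a ha

lemma reconPerm_h2 (hV : Valid isJ QJ S) (σ : Equiv.Perm (Fin (w S)))
    (htr : ∀ j : Fin (w S), (j : ℕ) < lam isJ QJ S (σ j)) : H2 isJ QJ S (reconPerm hV σ) := by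
  intro c hc
  by_cases hfc : c ∈ fC S
  · have hval : reconPerm hV σ c = erow S (σ (((fC S).orderIsoOfFin rfl).symm ⟨c, hfc⟩)) :=
      recon_free hfc
    rw [hval]
    have hcell := (cell_iff hV (σ (((fC S).orderIsoOfFin rfl).symm ⟨c, hfc⟩))
      (((fC S).orderIsoOfFin rfl).symm ⟨c, hfc⟩)).mp (htr _)
    rwa [ecol_symm_apply hfc] at hcell
  · exact absurd (recon_mem hfc) hc

lemma trv_reconPerm (hV : Valid isJ QJ S) (σ : Equiv.Perm (Fin (w S))) (j : Fin (w S)) :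
    trv S (reconPerm hV σ) j = σ j := by
  have hR := hV.2.2.2
  have hval : reconPerm hV σ (ecol S j) = erow S (σ j) := by
    rw [reconPerm_apply, recon_free (ecol_mem j), ecol_rank]
  have hm : reconPerm hV σ (ecol S j) ∈ fR S := by rw [hval]; exact erow_mem hR _
  rw [trv_eq hR hm]
  have : (⟨reconPerm hV σ (ecol S j), hm⟩ : {x // x ∈ fR S}) =
      ⟨erow S (σ j), erow_mem hR (σ j)⟩ := Subtype.ext hval
  rw [this]
  exact erow_rank hR (σ j)

end Recon

section Count

variable {m : ℕ}

lemma trv_cast {S₁ S₂ : Finset (Fin n × Fin n)} (h : S₁ = S₂) (π : Equiv.Perm (Fin n))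
    (j : Fin (w S₁)) :
    ((trv S₁ π j : ℕ)) = ((trv S₂ π (Fin.cast (congrArg w h) j) : ℕ)) := by
  subst h; rfl

lemma sigma_fib_eq (QA : Fin m → Fin m → Prop) {S₁ S₂ : Finset (Fin n × Fin n)}
    (h : S₁ = S₂) {hV₁ : Valid isJ QJ S₁} {hV₂ : Valid isJ QJ S₂}
    {σ₁ : Equiv.Perm (Fin (w S₁))} {σ₂ : Equiv.Perm (Fin (w S₂))}
    {hp₁ : IsTransversal (lam isJ QJ S₁) σ₁ ∧ ¬ TCD QA (lam isJ QJ S₁) ⇑σ₁}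
    {hp₂ : IsTransversal (lam isJ QJ S₂) σ₂ ∧ ¬ TCD QA (lam isJ QJ S₂) ⇑σ₂}
    (hσ : ∀ j : Fin (w S₁), ((σ₁ j : ℕ)) = ((σ₂ (Fin.cast (congrArg w h) j) : ℕ))) :
    (⟨⟨S₁, hV₁⟩, ⟨σ₁, hp₁⟩⟩ : Σ S : {S : Finset (Fin n × Fin n) // Valid isJ QJ S},
      {σ : Equiv.Perm (Fin (w S.1)) //
        IsTransversal (lam isJ QJ S.1) σ ∧ ¬ TCD QA (lam isJ QJ S.1) ⇑σ}) =
    ⟨⟨S₂, hV₂⟩, ⟨σ₂, hp₂⟩⟩ := by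
  subst h
  have : σ₁ = σ₂ := Equiv.ext (fun j => Fin.ext (hσ j))
  subst this
  rfl

lemma reconPerm_avoid (QA : Fin m → Fin m → Prop) (hm : 0 < m)
    (hQJ : ∀ a b : Fin t, QJ a b → isJ a ∧ isJ b) {S : Finset (Fin n × Fin n)}
    (hV : Valid isJ QJ S) (σ : Equiv.Perm (Fin (w S)))
    (hσ1 : IsTransversal (lam isJ QJ S) σ) (hσ2 : ¬ TCD QA (lam isJ QJ S) ⇑σ) :
    ¬ OccD isJ QJ QA (reconPerm hV σ) := by
  have h1 := reconPerm_h1 hV σ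
  have h2 := reconPerm_h2 hV σ hσ1
  rw [occD_iff_tcD QA hm hQJ hV h1 h2]
  intro htc
  apply hσ2
  have : trv S (reconPerm hV σ) = ⇑σ := funext (trv_reconPerm hV σ)
  rwa [this] at htc

/-- The main counting identity. -/
lemma card_avoiders_eq (QA : Fin m → Fin m → Prop) (hm : 0 < m)
    (hQJ : ∀ a b : Fin t, QJ a b → isJ a ∧ isJ b) :
    Nat.card {π : Equiv.Perm (Fin n) // ¬ OccD isJ QJ QA π} =
      Nat.card (Σ S : {S : Finset (Fin n × Fin n) // Valid isJ QJ S},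
        {σ : Equiv.Perm (Fin (w S.1)) //
          IsTransversal (lam isJ QJ S.1) σ ∧ ¬ TCD QA (lam isJ QJ S.1) ⇑σ}) := by
  symm
  apply Nat.card_eq_of_bijective
    (f := fun x => ⟨reconPerm x.1.2 x.2.1,
      reconPerm_avoid QA hm hQJ x.1.2 x.2.1 x.2.2.1 x.2.2.2⟩)
  constructor
  · rintro ⟨⟨S₁, hV₁⟩, ⟨σ₁, hσ₁1, hσ₁2⟩⟩ ⟨⟨S₂, hV₂⟩, ⟨σ₂, hσ₂1, hσ₂2⟩⟩ hGeq
    have hπ : reconPerm hV₁ σ₁ = reconPerm hV₂ σ₂ := congrArg Subtype.val hGeq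
    have hS₁ : dark isJ QJ (reconPerm hV₁ σ₁) = S₁ :=
      dark_eq hV₁ (reconPerm_h1 hV₁ σ₁) (reconPerm_h2 hV₁ σ₁ hσ₁1)
    have hS₂ : dark isJ QJ (reconPerm hV₂ σ₂) = S₂ :=
      dark_eq hV₂ (reconPerm_h1 hV₂ σ₂) (reconPerm_h2 hV₂ σ₂ hσ₂1)
    have hSS : S₁ = S₂ := by rw [← hS₁, ← hS₂, hπ]
    apply sigma_fib_eq QA hSS
    intro j
    have e₁ : σ₁ j = trv S₁ (reconPerm hV₁ σ₁) j := (trv_reconPerm hV₁ σ₁ j).symm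
    have e₂ : σ₂ (Fin.cast (congrArg w hSS) j) =
        trv S₂ (reconPerm hV₂ σ₂) (Fin.cast (congrArg w hSS) j) :=
      (trv_reconPerm hV₂ σ₂ _).symm
    rw [e₁, e₂, ← hπ]
    exact trv_cast hSS _ j
  · rintro ⟨π, hπ⟩
    have hV := valid_dark (isJ := isJ) (QJ := QJ) (π := π)
    have htrans : ∀ j : Fin (w (dark isJ QJ π)),
        (j : ℕ) < lam isJ QJ (dark isJ QJ π) (trv (dark isJ QJ π) π j) :=
      trv_transversal hV h1_dark h2_dark
    set σπ : Equiv.Perm (Fin (w (dark isJ QJ π))) :=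
      Equiv.ofBijective (trv (dark isJ QJ π) π)
        (Finite.injective_iff_bijective.mp (trv_injective hV h1_dark)) with hσπ
    have hcoe : ⇑σπ = trv (dark isJ QJ π) π := rfl
    have htr : IsTransversal (lam isJ QJ (dark isJ QJ π)) σπ := by
      intro j; rw [hcoe]; exact htrans j
    have hntc : ¬ TCD QA (lam isJ QJ (dark isJ QJ π)) ⇑σπ := by
      rw [hcoe]
      rw [occD_iff_tcD QA hm hQJ hV h1_dark h2_dark] at hπ
      exact hπ
    refine ⟨⟨⟨dark isJ QJ π, hV⟩, ⟨σπ, htr, hntc⟩⟩, ?_⟩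
    apply Subtype.ext
    apply Equiv.ext
    intro c
    show recon (dark isJ QJ π) σπ c = π c
    by_cases hc : c ∈ fC (dark isJ QJ π)
    · rw [recon_free hc, hcoe]
      set j := ((fC (dark isJ QJ π)).orderIsoOfFin rfl).symm ⟨c, hc⟩ with hj
      have hcol : ecol (dark isJ QJ π) j = c := ecol_symm_apply hc
      have hmem : π (ecol (dark isJ QJ π) j) ∈ fR (dark isJ QJ π) := col_pt_free h1_dark j
      rw [trv_eq hV.2.2.2 hmem, erow_symm_apply hV.2.2.2 hmem, hcol]
    · have hmem := recon_mem (σ := σπ) hc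
      exact (h1_dark _ hmem).symm

end Count

end PopAux

section Bridge

/-- Occurrence of a POP translates to the abstract occurrence predicate. -/
lemma occurs_iff_occD {k n m t : ℕ} (P : POP k) (I : Finset ℕ) (hmt : m + t = k)
    (QJ : Fin t → Fin t → Prop)
    (hPI : ∀ a b, P.lt a b → a ∉ I ∧ b ∉ I)
    (hPbelow : ∀ y x : ℕ, 1 ≤ y → y ≤ m → m + 1 ≤ x → x ≤ k → x ∉ I → P.lt y x)
    (hPJ : ∀ a b : Fin t, QJ a b ↔ P.lt (m + (a : ℕ) + 1) (m + (b : ℕ) + 1))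
    (π : Equiv.Perm (Fin n)) :
    P.Occurs π ↔ PopAux.OccD (fun b : Fin t => (m + (b : ℕ) + 1) ∉ I) QJ
      (fun a b : Fin m => P.lt ((a : ℕ) + 1) ((b : ℕ) + 1)) π := by
  constructor
  · rintro ⟨f, hf, hrel⟩
    refine ⟨fun a => f (Fin.cast hmt (Fin.castAdd t a)),
      fun b => f (Fin.cast hmt (Fin.natAdd m b)), ?_, ?_, ?_, ?_, ?_, ?_⟩
    · intro a b hab
      apply hf
      rw [Fin.lt_def]
      simp only [Fin.coe_cast, Fin.coe_castAdd]
      exact hab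
    · intro a b hab
      apply hf
      rw [Fin.lt_def]
      simp only [Fin.coe_cast, Fin.coe_natAdd]
      exact Nat.add_lt_add_left hab m
    · intro a b
      apply hf
      rw [Fin.lt_def]
      simp only [Fin.coe_cast, Fin.coe_castAdd, Fin.coe_natAdd]
      have := a.isLt
      omega
    · intro a b hab
      exact hrel _ _ hab
    · intro a b hb
      refine hrel _ _ ?_
      show P.lt ((a : ℕ) + 1) (m + (b : ℕ) + 1)
      have h1 := a.isLt
      have h2 := b.isLt
      exact hPbelow _ _ (by omega) (by omega) (by omega) (by omega) hb
    · intro a b hab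
      refine hrel _ _ ?_
      show P.lt (m + (a : ℕ) + 1) (m + (b : ℕ) + 1)
      exact (hPJ a b).mp hab
  · rintro ⟨fA, g, hfA, hg, hcross, hQA, hAJ, hQJg⟩
    have hlt : ∀ x : Fin k, (x : ℕ) < m + t := fun x => by rw [hmt]; exact x.isLt
    refine ⟨fun x => if h : (x : ℕ) < m then fA ⟨x, h⟩ else g ⟨(x : ℕ) - m, by
      have := hlt x; omega⟩, ?_, ?_⟩
    · intro a b hab
      rw [Fin.lt_def] at hab
      by_cases ha : (a : ℕ) < m <;> by_cases hb : (b : ℕ) < m <;> beta_reduce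
      · rw [dif_pos ha, dif_pos hb]
        exact hfA (show (⟨(a : ℕ), ha⟩ : Fin m) < ⟨(b : ℕ), hb⟩ from hab)
      · rw [dif_pos ha, dif_neg hb]
        exact hcross _ _
      · omega
      · rw [dif_neg ha, dif_neg hb]
        refine hg ?_
        rw [Fin.lt_def]
        show (a : ℕ) - m < (b : ℕ) - m
        omega
    · intro a b hab
      by_cases ha : (a : ℕ) < m <;> by_cases hb : (b : ℕ) < m <;> beta_reduce
      · rw [dif_pos ha, dif_pos hb]
        exact hQA ⟨(a : ℕ), ha⟩ ⟨(b : ℕ), hb⟩ hab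
      · rw [dif_pos ha, dif_neg hb]
        refine hAJ _ _ ?_
        have harith : m + ((b : ℕ) - m) + 1 = (b : ℕ) + 1 := by omega
        show (m + ((b : ℕ) - m) + 1) ∉ I
        rw [harith]
        exact (hPI _ _ hab).2
      · exfalso
        have h1 : (a : ℕ) + 1 ∉ I := (hPI _ _ hab).1
        have h2 : P.lt ((b : ℕ) + 1) ((a : ℕ) + 1) :=
          hPbelow _ _ (by omega) (by omega) (by omega) (by have := a.isLt; omega) h1
        exact P.irrefl _ (P.trans _ _ _ hab h2)
      · rw [dif_neg ha, dif_neg hb]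
        refine hQJg _ _ ((hPJ _ _).mpr ?_)
        have h1 : m + ((a : ℕ) - m) + 1 = (a : ℕ) + 1 := by omega
        have h2 : m + ((b : ℕ) - m) + 1 = (b : ℕ) + 1 := by omega
        simp only [h1, h2]
        exact hab

lemma tcontains_iff_tcD {k m : ℕ} (P : POP k) (hmk : m ≤ k) {q : ℕ} (lam : Fin q → ℕ)
    (σ : Equiv.Perm (Fin q)) :
    (P.restrictInit m).TContains lam σ ↔
      PopAux.TCD (fun a b : Fin m => P.lt ((a : ℕ) + 1) ((b : ℕ) + 1)) lam ⇑σ := by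
  constructor
  · rintro ⟨r, c, τ, hr, hc, hcell, hpt, hrel⟩
    exact ⟨r, c, τ, hr, hc, hcell, hpt, fun a b hab =>
      hrel a b ⟨by have := a.isLt; omega, by have := b.isLt; omega, hab⟩⟩
  · rintro ⟨r, c, τ, hr, hc, hcell, hpt, hrel⟩
    exact ⟨r, c, τ, hr, hc, hcell, hpt, fun a b hab => hrel a b hab.2.2⟩

end Bridge


/-- **Theorem 1.2.** Let `p, p'` be POPs of size `k` with the same set `I` of isolated
labels, such that (in both) every label in `{1,…,i₁−1}` is strictly below every label of
`{i₁,…,k} \\ I`, where `i₁ = min I`. If the restrictions to `{1,…,i₁−1}` are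
shape-Wilf-equivalent and the restrictions to `{i₁,…,k} \\ I` coincide, then `p ∼ p'`. -/
theorem wilfEquiv_of_shapeWilfEquiv_of_isolated {k : ℕ} (p p' : POP k)
    (I : Finset ℕ) (hne : I.Nonempty)
    (hIp : ∀ i, p.Isolated i ↔ i ∈ I)
    (hIp' : ∀ i, p'.Isolated i ↔ i ∈ I)
    (hbelow : ∀ x y, I.min' hne ≤ x → x ≤ k → x ∉ I → 1 ≤ y → y < I.min' hne →
      p.lt y x ∧ p'.lt y x)
    (hJ : ∀ a b, I.min' hne ≤ a → a ≤ k → a ∉ I → I.min' hne ≤ b → b ≤ k → b ∉ I →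
      (p.lt a b ↔ p'.lt a b))
    (hI : ShapeWilfEquiv (p.restrictInit (I.min' hne - 1))
      (p'.restrictInit (I.min' hne - 1))) :
    WilfEquiv p p' := by
  intro n _
  have hi₁I : I.min' hne ∈ I := I.min'_mem hne
  have hiso₁ : p.Isolated (I.min' hne) := (hIp _).mpr hi₁I
  have hk1 : 1 ≤ I.min' hne := hiso₁.1
  have hkk : I.min' hne ≤ k := hiso₁.2.1
  have hPI : ∀ a b, p.lt a b → a ∉ I ∧ b ∉ I := by
    intro a b h
    constructor
    · intro ha; exact (((hIp a).mpr ha).2.2 b).1 h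
    · intro hb; exact (((hIp b).mpr hb).2.2 a).2 h
  have hPI' : ∀ a b, p'.lt a b → a ∉ I ∧ b ∉ I := by
    intro a b h
    constructor
    · intro ha; exact (((hIp' a).mpr ha).2.2 b).1 h
    · intro hb; exact (((hIp' b).mpr hb).2.2 a).2 h
  by_cases hm0 : I.min' hne = 1
  · -- the lower part is empty and the two POPs coincide
    have hiff : ∀ a b, p.lt a b ↔ p'.lt a b := by
      intro a b
      constructor
      · intro h
        obtain ⟨h1, h2, h3, h4⟩ := p.supp a b h
        exact (hJ a b (by omega) h2 (hPI a b h).1 (by omega) h4 (hPI a b h).2).mp h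
      · intro h
        obtain ⟨h1, h2, h3, h4⟩ := p'.supp a b h
        exact (hJ a b (by omega) h2 (hPI' a b h).1 (by omega) h4 (hPI' a b h).2).mpr h
    have hocc : ∀ π : Equiv.Perm (Fin n), p.Occurs π ↔ p'.Occurs π := by
      intro π
      constructor
      · rintro ⟨f, hf, hrel⟩; exact ⟨f, hf, fun a b h => hrel a b ((hiff _ _).mpr h)⟩
      · rintro ⟨f, hf, hrel⟩; exact ⟨f, hf, fun a b h => hrel a b ((hiff _ _).mp h)⟩
    exact Nat.card_congr (Equiv.subtypeEquivRight (fun π => not_congr (hocc π)))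
  · set m := I.min' hne - 1 with hmdef
    set t := k - m with htdef
    have hm : 0 < m := by omega
    have hmt : m + t = k := by omega
    have hmk : m ≤ k := by omega
    set isJ : Fin t → Prop := fun b => (m + (b : ℕ) + 1) ∉ I with hisJ
    set QJ : Fin t → Fin t → Prop :=
      fun a b => p.lt (m + (a : ℕ) + 1) (m + (b : ℕ) + 1) with hQJdef
    set QAp : Fin m → Fin m → Prop :=
      fun a b => p.lt ((a : ℕ) + 1) ((b : ℕ) + 1) with hQApdef
    set QAp' : Fin m → Fin m → Prop :=
      fun a b => p'.lt ((a : ℕ) + 1) ((b : ℕ) + 1) with hQAp'def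
    have hQJ : ∀ a b : Fin t, QJ a b → isJ a ∧ isJ b := fun a b h => hPI _ _ h
    have hpbelow : ∀ y x : ℕ, 1 ≤ y → y ≤ m → m + 1 ≤ x → x ≤ k → x ∉ I → p.lt y x := by
      intro y x h1 h2 h3 h4 h5
      exact (hbelow x y (by omega) h4 h5 h1 (by omega)).1
    have hpbelow' : ∀ y x : ℕ, 1 ≤ y → y ≤ m → m + 1 ≤ x → x ≤ k → x ∉ I → p'.lt y x := by
      intro y x h1 h2 h3 h4 h5
      exact (hbelow x y (by omega) h4 h5 h1 (by omega)).2
    have hPJ : ∀ a b : Fin t, QJ a b ↔ p.lt (m + (a : ℕ) + 1) (m + (b : ℕ) + 1) :=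
      fun a b => Iff.rfl
    have hPJ' : ∀ a b : Fin t, QJ a b ↔ p'.lt (m + (a : ℕ) + 1) (m + (b : ℕ) + 1) := by
      intro a b
      have ha1 := a.isLt
      have hb1 := b.isLt
      constructor
      · intro h
        have hni := hPI _ _ h
        exact (hJ _ _ (by omega) (by omega) hni.1 (by omega) (by omega) hni.2).mp h
      · intro h
        have hni := hPI' _ _ h
        exact (hJ _ _ (by omega) (by omega) hni.1 (by omega) (by omega) hni.2).mpr h
    have hbr : ∀ π : Equiv.Perm (Fin n),
        p.Occurs π ↔ PopAux.OccD isJ QJ QAp π :=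
      occurs_iff_occD p I hmt QJ hPI hpbelow hPJ
    have hbr' : ∀ π : Equiv.Perm (Fin n),
        p'.Occurs π ↔ PopAux.OccD isJ QJ QAp' π :=
      occurs_iff_occD p' I hmt QJ hPI' hpbelow' hPJ'
    have step1 : p.avoiders n = Nat.card {π : Equiv.Perm (Fin n) // ¬ PopAux.OccD isJ QJ QAp π} :=
      Nat.card_congr (Equiv.subtypeEquivRight (fun π => not_congr (hbr π)))
    have step1' : p'.avoiders n =
        Nat.card {π : Equiv.Perm (Fin n) // ¬ PopAux.OccD isJ QJ QAp' π} :=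
      Nat.card_congr (Equiv.subtypeEquivRight (fun π => not_congr (hbr' π)))
    rw [step1, step1', PopAux.card_avoiders_eq QAp hm hQJ, PopAux.card_avoiders_eq QAp' hm hQJ]
    apply Nat.card_congr
    apply Equiv.sigmaCongrRight
    intro S
    have hcp : Nat.card {σ : Equiv.Perm (Fin (PopAux.w S.1)) //
          IsTransversal (PopAux.lam isJ QJ S.1) σ ∧ ¬ PopAux.TCD QAp (PopAux.lam isJ QJ S.1) ⇑σ} =
        (p.restrictInit m).shapeAvoiders (PopAux.lam isJ QJ S.1) :=
      Nat.card_congr (Equiv.subtypeEquivRight (fun σ =>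
        and_congr Iff.rfl (not_congr (tcontains_iff_tcD p hmk (PopAux.lam isJ QJ S.1) σ).symm)))
    have hcp' : Nat.card {σ : Equiv.Perm (Fin (PopAux.w S.1)) //
          IsTransversal (PopAux.lam isJ QJ S.1) σ ∧ ¬ PopAux.TCD QAp' (PopAux.lam isJ QJ S.1) ⇑σ} =
        (p'.restrictInit m).shapeAvoiders (PopAux.lam isJ QJ S.1) :=
      Nat.card_congr (Equiv.subtypeEquivRight (fun σ =>
        and_congr Iff.rfl (not_congr (tcontains_iff_tcD p' hmk (PopAux.lam isJ QJ S.1) σ).symm)))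
    have hmid := hI (PopAux.w S.1) (PopAux.lam isJ QJ S.1)
      (PopAux.lam_antitone S.2) (PopAux.lam_pos S.2)
    have hcard : Nat.card {σ : Equiv.Perm (Fin (PopAux.w S.1)) //
          IsTransversal (PopAux.lam isJ QJ S.1) σ ∧ ¬ PopAux.TCD QAp (PopAux.lam isJ QJ S.1) ⇑σ} =
        Nat.card {σ : Equiv.Perm (Fin (PopAux.w S.1)) //
          IsTransversal (PopAux.lam isJ QJ S.1) σ ∧ ¬ PopAux.TCD QAp' (PopAux.lam isJ QJ S.1) ⇑σ} := by
      rw [hcp, hcp', hmid]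
    exact (Finite.card_eq.mp hcard).some
end PopAuxSec
end

section
/- For any two POPs p and q, the disjoint sums p+q and q+p are Wilf-equivalent. -/
section AuxWilfProof

open Finset

variable {k l n : ℕ}

/-- Occurrence of `p` in `π` with all positions in `[a, b)`. -/
def OccIn (p : POP k) (π : Equiv.Perm (Fin n)) (a b : ℕ) : Prop :=
  ∃ f : Fin k → Fin n, StrictMono f ∧ (∀ i, a ≤ (f i : ℕ) ∧ (f i : ℕ) < b) ∧
    ∀ i j : Fin k, p.lt ((i : ℕ) + 1) ((j : ℕ) + 1) → π (f i) < π (f j)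

lemma occIn_mono {p : POP k} {π : Equiv.Perm (Fin n)} {a b a' b' : ℕ}
    (h : OccIn p π a b) (ha : a' ≤ a) (hb : b ≤ b') : OccIn p π a' b' := by
  obtain ⟨f, h1, h2, h3⟩ := h
  exact ⟨f, h1, fun i => ⟨le_trans ha (h2 i).1, lt_of_lt_of_le (h2 i).2 hb⟩, h3⟩

lemma occIn_to_n {p : POP k} {π : Equiv.Perm (Fin n)} {a b : ℕ}
    (h : OccIn p π a b) : OccIn p π a n := by
  obtain ⟨f, h1, h2, h3⟩ := h
  exact ⟨f, h1, fun i => ⟨(h2 i).1, (f i).isLt⟩, h3⟩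

lemma not_occIn (p : POP k) (hk : 1 ≤ k) {π : Equiv.Perm (Fin n)} {a b : ℕ}
    (hab : b ≤ a) : ¬ OccIn p π a b := by
  rintro ⟨f, -, h2, -⟩
  have := h2 ⟨0, hk⟩
  omega

lemma disjSum_occurs_merge (p : POP k) (q : POP l) {π : Equiv.Perm (Fin n)} {t : ℕ}
    (hp : OccIn p π 0 t) (hq : OccIn q π t n) : (DisjSum p q).Occurs π := by
  obtain ⟨f, hf1, hf2, hf3⟩ := hp
  obtain ⟨g, hg1, hg2, hg3⟩ := hq
  refine ⟨fun i => if h : (i : ℕ) < k then f ⟨i, h⟩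
    else g ⟨(i : ℕ) - k, by have := i.isLt; omega⟩, ?_, ?_⟩
  · intro a b hab
    have hab' : (a : ℕ) < (b : ℕ) := hab
    dsimp only
    split_ifs with h1 h2 h3
    · exact hf1 (show (⟨(a : ℕ), h1⟩ : Fin k) < ⟨(b : ℕ), h2⟩ from hab')
    · have x1 := (hf2 ⟨(a : ℕ), h1⟩).2
      have x2 := (hg2 ⟨(b : ℕ) - k, by have := b.isLt; omega⟩).1
      exact Fin.lt_def.mpr (by omega)
    · omega
    · refine hg1 ?_
      simp only [Fin.mk_lt_mk]
      omega
  · intro a b hab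
    simp only [DisjSum] at hab
    dsimp only
    rcases hab with ⟨ha, hb, h⟩ | ⟨ha, hb, h⟩
    · rw [dif_pos (show (a : ℕ) < k by omega), dif_pos (show (b : ℕ) < k by omega)]
      exact hf3 ⟨(a : ℕ), by omega⟩ ⟨(b : ℕ), by omega⟩ h
    · rw [dif_neg (show ¬ (a : ℕ) < k by omega), dif_neg (show ¬ (b : ℕ) < k by omega)]
      refine hg3 ⟨(a : ℕ) - k, by have := a.isLt; omega⟩ ⟨(b : ℕ) - k, by have := b.isLt; omega⟩ ?_
      have e1 : (a : ℕ) + 1 - k = (a : ℕ) - k + 1 := by omega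
      have e2 : (b : ℕ) + 1 - k = (b : ℕ) - k + 1 := by omega
      rw [e1, e2] at h
      exact h

lemma disjSum_occurs_split (p : POP k) (q : POP l) (hk : 1 ≤ k) (hl : 1 ≤ l)
    {π : Equiv.Perm (Fin n)} (h : (DisjSum p q).Occurs π) :
    ∃ t ≤ n, OccIn p π 0 t ∧ OccIn q π t n := by
  obtain ⟨F, hF1, hF3⟩ := h
  refine ⟨(F ⟨k, by omega⟩ : ℕ), Nat.le_of_lt (F ⟨k, by omega⟩).isLt, ?_, ?_⟩
  · refine ⟨fun i => F ⟨i, by have := i.isLt; omega⟩, ?_, ?_, ?_⟩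
    · intro a b hab
      exact hF1 (show ((⟨(a : ℕ), _⟩ : Fin (k + l))) < ⟨(b : ℕ), _⟩ from
        Fin.mk_lt_mk.mpr hab)
    · intro i
      refine ⟨Nat.zero_le _, ?_⟩
      exact hF1 (show ((⟨(i : ℕ), _⟩ : Fin (k + l))) < ⟨k, _⟩ from Fin.mk_lt_mk.mpr i.isLt)
    · intro i j hij
      refine hF3 ⟨(i : ℕ), by have := i.isLt; omega⟩ ⟨(j : ℕ), by have := j.isLt; omega⟩ ?_
      have := p.supp _ _ hij
      simp only [DisjSum]
      exact Or.inl ⟨by omega, by omega, hij⟩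
  · refine ⟨fun j => F ⟨k + (j : ℕ), by have := j.isLt; omega⟩, ?_, ?_, ?_⟩
    · intro a b hab
      exact hF1 (Fin.mk_lt_mk.mpr (by have : (a : ℕ) < (b : ℕ) := hab; omega))
    · intro j
      refine ⟨?_, (F ⟨k + (j : ℕ), _⟩).isLt⟩
      exact hF1.monotone (Fin.mk_le_mk.mpr (by omega))
    · intro i j hij
      refine hF3 ⟨k + (i : ℕ), by have := i.isLt; omega⟩ ⟨k + (j : ℕ), by have := j.isLt; omega⟩ ?_
      have := q.supp _ _ hij
      simp only [DisjSum]
      refine Or.inr ⟨by omega, by omega, ?_⟩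
      have e1 : k + (i : ℕ) + 1 - k = (i : ℕ) + 1 := by omega
      have e2 : k + (j : ℕ) + 1 - k = (j : ℕ) + 1 := by omega
      rw [e1, e2]
      exact hij

lemma occIn_trans_iff (p : POP k) (π e : Equiv.Perm (Fin n)) {a b a' b' : ℕ}
    (h1 : ∀ i : Fin n, a ≤ (i : ℕ) → (i : ℕ) < b → a' ≤ (e i : ℕ) ∧ (e i : ℕ) < b')
    (h2 : ∀ i : Fin n, a' ≤ (e i : ℕ) → (e i : ℕ) < b' → a ≤ (i : ℕ) ∧ (i : ℕ) < b)
    (h3 : ∀ i j : Fin n, a ≤ (i : ℕ) → (j : ℕ) < b → i < j → e i < e j) :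
    OccIn p (e.trans π) a b ↔ OccIn p π a' b' := by
  constructor
  · rintro ⟨f, hf1, hf2, hf3⟩
    refine ⟨fun i => e (f i), ?_, ?_, hf3⟩
    · intro i j hij
      exact h3 _ _ (hf2 i).1 (hf2 j).2 (hf1 hij)
    · intro i
      exact h1 _ (hf2 i).1 (hf2 i).2
  · rintro ⟨g, hg1, hg2, hg3⟩
    have key : ∀ i, a ≤ (e.symm (g i) : ℕ) ∧ (e.symm (g i) : ℕ) < b := by
      intro i
      have hb1 : a' ≤ (e (e.symm (g i)) : ℕ) := by
        rw [Equiv.apply_symm_apply]; exact (hg2 i).1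
      have hb2 : (e (e.symm (g i)) : ℕ) < b' := by
        rw [Equiv.apply_symm_apply]; exact (hg2 i).2
      exact h2 _ hb1 hb2
    refine ⟨fun i => e.symm (g i), ?_, key, ?_⟩
    · intro i j hij
      rcases lt_trichotomy (e.symm (g i)) (e.symm (g j)) with h | h | h
      · exact h
      · exfalso
        have : g i = g j := e.symm.injective h
        exact absurd (hg1 hij) (by rw [this]; exact lt_irrefl _)
      · exfalso
        have := h3 _ _ (key j).1 (key i).2 h
        rw [Equiv.apply_symm_apply, Equiv.apply_symm_apply] at this
        exact lt_asymm this (hg1 hij)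
    · intro i j hij
      have := hg3 i j hij
      simpa using this

/-- Rotation of positions by `t`. -/
def rotC (n t : ℕ) : Equiv.Perm (Fin n) where
  toFun i := ⟨if (i : ℕ) < n - t then (i : ℕ) + t else (i : ℕ) - (n - t),
    by have := i.isLt; split <;> omega⟩
  invFun j := ⟨if (j : ℕ) < t then (j : ℕ) + (n - t) else (j : ℕ) - t,
    by have := j.isLt; split <;> omega⟩
  left_inv i := by
    have := i.isLt
    apply Fin.ext
    dsimp only
    split <;> split <;> omega
  right_inv j := by
    have := j.isLt
    apply Fin.ext
    dsimp only
    split <;> split <;> omega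

/-- Rotation with a shifted block, used for the `d`-counts. -/
def rotD (n t : ℕ) (ht1 : 1 ≤ t) (ht : t ≤ n) : Equiv.Perm (Fin n) where
  toFun i := ⟨if (i : ℕ) < n - t then (i : ℕ) + t
      else if (i : ℕ) = n - t then t - 1 else (i : ℕ) - (n - t) - 1,
    by have := i.isLt; split <;> [omega; (split <;> omega)]⟩
  invFun j := ⟨if (j : ℕ) < t - 1 then (j : ℕ) + (n - t) + 1
      else if (j : ℕ) = t - 1 then n - t else (j : ℕ) - t,
    by have := j.isLt; split <;> [omega; (split <;> omega)]⟩
  left_inv i := by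
    have := i.isLt
    apply Fin.ext
    dsimp only
    split <;> [skip; split] <;> split <;> first | omega | (split <;> omega)
  right_inv j := by
    have := j.isLt
    apply Fin.ext
    dsimp only
    split <;> [skip; split] <;> split <;> first | omega | (split <;> omega)

/-- Counting predicate-satisfying permutations. -/
noncomputable def cnt (n : ℕ) (Φ : Equiv.Perm (Fin n) → Prop) : ℕ :=
  Nat.card {π : Equiv.Perm (Fin n) // Φ π}

lemma cnt_congr {Φ Ψ : Equiv.Perm (Fin n) → Prop} (h : ∀ π, Φ π ↔ Ψ π) :
    cnt n Φ = cnt n Ψ := Nat.card_congr (Equiv.subtypeEquivRight h)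

lemma cnt_comp (e : Equiv.Perm (Fin n)) (Ψ : Equiv.Perm (Fin n) → Prop) :
    cnt n (fun π => Ψ (e.trans π)) = cnt n Ψ :=
  Nat.card_congr (Equiv.subtypeEquiv (Equiv.mulRight e) (fun π => by
    have : (Equiv.mulRight e) π = e.trans π := Equiv.Perm.mul_def π e
    rw [this]))

lemma cnt_eq_filter (Φ : Equiv.Perm (Fin n) → Prop) [DecidablePred Φ] :
    cnt n Φ = (Finset.univ.filter Φ).card := by
  rw [cnt, Nat.card_eq_fintype_card, Fintype.card_subtype]

lemma cnt_add (Φ P : Equiv.Perm (Fin n) → Prop) :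
    cnt n (fun π => Φ π ∧ P π) + cnt n (fun π => Φ π ∧ ¬ P π) = cnt n Φ := by
  classical
  rw [cnt_eq_filter, cnt_eq_filter, cnt_eq_filter]
  rw [show Finset.univ.filter (fun π => Φ π ∧ P π)
      = (Finset.univ.filter Φ).filter P from by rw [Finset.filter_filter]]
  rw [show Finset.univ.filter (fun π => Φ π ∧ ¬ P π)
      = (Finset.univ.filter Φ).filter (fun π => ¬ P π) from by rw [Finset.filter_filter]]
  exact Finset.card_filter_add_card_filter_not P

lemma cnt_fiberwise (Φ : Equiv.Perm (Fin n) → Prop) (f : Equiv.Perm (Fin n) → ℕ) (m : ℕ)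
    (h : ∀ π, f π ≤ m) :
    cnt n Φ = ∑ t ∈ Finset.range (m + 1), cnt n (fun π => Φ π ∧ f π = t) := by
  classical
  rw [cnt_eq_filter]
  rw [Finset.card_eq_sum_card_fiberwise (f := f) (t := Finset.range (m + 1))
    (fun π _ => Finset.mem_range.mpr (Nat.lt_succ_of_le (h π)))]
  refine Finset.sum_congr rfl fun t _ => ?_
  rw [cnt_eq_filter, Finset.filter_filter]


lemma cnt_c_symm (p : POP k) (q : POP l) {t : ℕ} (ht : t ≤ n) :
    cnt n (fun π => ¬ OccIn p π 0 t ∧ ¬ OccIn q π t n)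
    = cnt n (fun π => ¬ OccIn q π 0 (n - t) ∧ ¬ OccIn p π (n - t) n) := by
  refine Eq.trans (cnt_congr ?_) (cnt_comp (rotC n t)
    (fun π => ¬ OccIn q π 0 (n - t) ∧ ¬ OccIn p π (n - t) n))
  intro π
  have hv : ∀ i : Fin n, ((rotC n t) i : ℕ)
      = if (i : ℕ) < n - t then (i : ℕ) + t else (i : ℕ) - (n - t) := fun i => rfl
  have e1 : OccIn q ((rotC n t).trans π) 0 (n - t) ↔ OccIn q π t n := by
    refine occIn_trans_iff q π (rotC n t) ?_ ?_ ?_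
    · intro i hi1 hi2
      have hvi := hv i
      have := i.isLt
      split_ifs at hvi <;> omega
    · intro i hi1 hi2
      have hvi := hv i
      have := i.isLt
      split_ifs at hvi <;> omega
    · intro i j hi hj hij
      have hvi := hv i
      have hvj := hv j
      have := i.isLt
      have := j.isLt
      have hij' : (i : ℕ) < (j : ℕ) := hij
      rw [Fin.lt_def]
      split_ifs at hvi hvj <;> omega
  have e2 : OccIn p ((rotC n t).trans π) (n - t) n ↔ OccIn p π 0 t := by
    refine occIn_trans_iff p π (rotC n t) ?_ ?_ ?_
    · intro i hi1 hi2
      have hvi := hv i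
      have := i.isLt
      split_ifs at hvi <;> omega
    · intro i hi1 hi2
      have hvi := hv i
      have := i.isLt
      split_ifs at hvi <;> omega
    · intro i j hi hj hij
      have hvi := hv i
      have hvj := hv j
      have := i.isLt
      have := j.isLt
      have hij' : (i : ℕ) < (j : ℕ) := hij
      rw [Fin.lt_def]
      split_ifs at hvi hvj <;> omega
  constructor
  · rintro ⟨h1, h2⟩
    exact ⟨fun h => h2 (e1.mp h), fun h => h1 (e2.mp h)⟩
  · rintro ⟨h1, h2⟩
    exact ⟨fun h => h2 (e2.mpr h), fun h => h1 (e1.mpr h)⟩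

lemma cnt_d_symm (p : POP k) (q : POP l) {t : ℕ} (ht1 : 1 ≤ t) (ht : t ≤ n) :
    cnt n (fun π => ¬ OccIn p π 0 (t - 1) ∧ ¬ OccIn q π t n)
    = cnt n (fun π => ¬ OccIn q π 0 (n - t) ∧ ¬ OccIn p π (n + 1 - t) n) := by
  refine Eq.trans (cnt_congr ?_) (cnt_comp (rotD n t ht1 ht)
    (fun π => ¬ OccIn q π 0 (n - t) ∧ ¬ OccIn p π (n + 1 - t) n))
  intro π
  have hv : ∀ i : Fin n, ((rotD n t ht1 ht) i : ℕ)
      = if (i : ℕ) < n - t then (i : ℕ) + t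
        else if (i : ℕ) = n - t then t - 1 else (i : ℕ) - (n - t) - 1 := fun i => rfl
  have e1 : OccIn q ((rotD n t ht1 ht).trans π) 0 (n - t) ↔ OccIn q π t n := by
    refine occIn_trans_iff q π (rotD n t ht1 ht) ?_ ?_ ?_
    · intro i hi1 hi2
      have hvi := hv i
      have := i.isLt
      split_ifs at hvi <;> omega
    · intro i hi1 hi2
      have hvi := hv i
      have := i.isLt
      split_ifs at hvi <;> omega
    · intro i j hi hj hij
      have hvi := hv i
      have hvj := hv j
      have := i.isLt
      have := j.isLt
      have hij' : (i : ℕ) < (j : ℕ) := hij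
      rw [Fin.lt_def]
      split_ifs at hvi hvj <;> omega
  have e2 : OccIn p ((rotD n t ht1 ht).trans π) (n + 1 - t) n ↔ OccIn p π 0 (t - 1) := by
    refine occIn_trans_iff p π (rotD n t ht1 ht) ?_ ?_ ?_
    · intro i hi1 hi2
      have hvi := hv i
      have := i.isLt
      split_ifs at hvi <;> omega
    · intro i hi1 hi2
      have hvi := hv i
      have := i.isLt
      split_ifs at hvi <;> omega
    · intro i j hi hj hij
      have hvi := hv i
      have hvj := hv j
      have := i.isLt
      have := j.isLt
      have hij' : (i : ℕ) < (j : ℕ) := hij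
      rw [Fin.lt_def]
      split_ifs at hvi hvj <;> omega
  constructor
  · rintro ⟨h1, h2⟩
    exact ⟨fun h => h2 (e1.mp h), fun h => h1 (e2.mp h)⟩
  · rintro ⟨h1, h2⟩
    exact ⟨fun h => h2 (e2.mpr h), fun h => h1 (e1.mpr h)⟩

lemma key_eq (p : POP k) (q : POP l) (hk : 1 ≤ k) (hl : 1 ≤ l) (n : ℕ) :
    (DisjSum p q).avoiders n
      + ∑ t ∈ Finset.range n, cnt n (fun π => ¬ OccIn p π 0 (t + 1) ∧ ¬ OccIn q π (t + 1) n)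
    = cnt n (fun π => ¬ OccIn p π 0 n ∧ ¬ OccIn q π n n)
      + ∑ t ∈ Finset.range n, cnt n (fun π => ¬ OccIn p π 0 t ∧ ¬ OccIn q π (t + 1) n) := by
  classical
  have havd : (DisjSum p q).avoiders n = cnt n (fun π => ¬ (DisjSum p q).Occurs π) := rfl
  have tag_le : ∀ π : Equiv.Perm (Fin n), sInf {s | OccIn p π 0 s} ≤ n := by
    intro π
    by_cases h : OccIn p π 0 n
    · exact Nat.sInf_le h
    · have hemp : {s | OccIn p π 0 s} = ∅ := by
        ext s
        simp only [Set.mem_setOf_eq, Set.mem_empty_iff_false, iff_false]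
        intro hs
        exact h (occIn_to_n hs)
      rw [hemp, Nat.sInf_empty]
      omega
  have main := cnt_fiberwise (n := n) (fun π => ¬ (DisjSum p q).Occurs π)
    (fun π => sInf {s | OccIn p π 0 s}) n tag_le
  have fib0 : cnt n (fun π => ¬ (DisjSum p q).Occurs π ∧ sInf {s | OccIn p π 0 s} = 0)
      = cnt n (fun π => ¬ OccIn p π 0 n ∧ ¬ OccIn q π n n) := by
    refine cnt_congr fun π => ?_
    constructor
    · rintro ⟨hav, h0⟩
      refine ⟨?_, not_occIn q hl le_rfl⟩
      intro hPn
      have hmem := Nat.sInf_mem (⟨n, hPn⟩ : {s | OccIn p π 0 s}.Nonempty)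
      rw [h0] at hmem
      exact not_occIn p hk le_rfl hmem
    · rintro ⟨hPn, -⟩
      have hemp : {s | OccIn p π 0 s} = ∅ := by
        ext s
        simp only [Set.mem_setOf_eq, Set.mem_empty_iff_false, iff_false]
        intro hs
        exact hPn (occIn_to_n hs)
      refine ⟨?_, by rw [hemp, Nat.sInf_empty]⟩
      intro hocc
      obtain ⟨s, hsn, h1, h2⟩ := disjSum_occurs_split p q hk hl hocc
      exact hPn (occIn_to_n h1)
  have fib : ∀ t, t < n →
      cnt n (fun π => ¬ (DisjSum p q).Occurs π ∧ sInf {s | OccIn p π 0 s} = t + 1)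
      = cnt n (fun π => (¬ OccIn p π 0 t ∧ ¬ OccIn q π (t + 1) n) ∧ OccIn p π 0 (t + 1)) := by
    intro t htn
    refine cnt_congr fun π => ?_
    constructor
    · rintro ⟨hav, htag⟩
      have hne : {s | OccIn p π 0 s}.Nonempty := by
        by_contra hne
        rw [Set.not_nonempty_iff_eq_empty] at hne
        rw [hne, Nat.sInf_empty] at htag
        omega
      have hmem := Nat.sInf_mem hne
      rw [htag] at hmem
      refine ⟨⟨?_, ?_⟩, hmem⟩
      · intro hPt
        have h1 : sInf {s | OccIn p π 0 s} ≤ t := Nat.sInf_le hPt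
        have h2 : sInf {s | OccIn p π 0 s} = t + 1 := htag
        omega
      · intro hQ
        exact hav (disjSum_occurs_merge p q hmem hQ)
    · rintro ⟨⟨hPt, hQ⟩, hPt1⟩
      constructor
      · intro hocc
        obtain ⟨s, hsn, h1, h2⟩ := disjSum_occurs_split p q hk hl hocc
        by_cases hs : s ≤ t
        · exact hPt (occIn_mono h1 le_rfl hs)
        · exact hQ (occIn_mono h2 (by omega) le_rfl)
      · have hle : sInf {s | OccIn p π 0 s} ≤ t + 1 := Nat.sInf_le hPt1
        have hgt : ¬ sInf {s | OccIn p π 0 s} ≤ t := by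
          intro hle'
          have hne : {s | OccIn p π 0 s}.Nonempty := ⟨t + 1, hPt1⟩
          have hmem := Nat.sInf_mem hne
          exact hPt (occIn_mono hmem le_rfl hle')
        omega
  rw [havd, main, Finset.sum_range_succ']
  have hsum1 : ∑ t ∈ Finset.range n,
      cnt n (fun π => ¬ (DisjSum p q).Occurs π ∧ sInf {s | OccIn p π 0 s} = t + 1)
      = ∑ t ∈ Finset.range n,
      cnt n (fun π => (¬ OccIn p π 0 t ∧ ¬ OccIn q π (t + 1) n) ∧ OccIn p π 0 (t + 1)) :=
    Finset.sum_congr rfl fun t ht => fib t (Finset.mem_range.mp ht)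
  have hsum2 : ∑ t ∈ Finset.range n,
        cnt n (fun π => (¬ OccIn p π 0 t ∧ ¬ OccIn q π (t + 1) n) ∧ OccIn p π 0 (t + 1))
      + ∑ t ∈ Finset.range n,
        cnt n (fun π => ¬ OccIn p π 0 (t + 1) ∧ ¬ OccIn q π (t + 1) n)
      = ∑ t ∈ Finset.range n,
        cnt n (fun π => ¬ OccIn p π 0 t ∧ ¬ OccIn q π (t + 1) n) := by
    rw [← Finset.sum_add_distrib]
    refine Finset.sum_congr rfl fun t _ => ?_
    have hadd := cnt_add (n := n) (fun π => ¬ OccIn p π 0 t ∧ ¬ OccIn q π (t + 1) n)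
      (fun π => OccIn p π 0 (t + 1))
    rw [← hadd]
    have hrepl : cnt n (fun π => ¬ OccIn p π 0 (t + 1) ∧ ¬ OccIn q π (t + 1) n)
        = cnt n (fun π => (¬ OccIn p π 0 t ∧ ¬ OccIn q π (t + 1) n) ∧ ¬ OccIn p π 0 (t + 1)) := by
      refine cnt_congr fun π => ?_
      constructor
      · rintro ⟨h1, h2⟩
        exact ⟨⟨fun h => h1 (occIn_mono h le_rfl (by omega)), h2⟩, h1⟩
      · rintro ⟨⟨h1, h2⟩, h3⟩
        exact ⟨h3, h2⟩
    rw [hrepl]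
  rw [hsum1, fib0]
  omega

lemma avoiders_congr {k k' : ℕ} (p : POP k) (p' : POP k') (hkk : k = k')
    (h : ∀ a b, p.lt a b ↔ p'.lt a b) (n : ℕ) : p.avoiders n = p'.avoiders n := by
  subst hkk
  refine Nat.card_congr (Equiv.subtypeEquivRight fun π => not_congr ?_)
  exact exists_congr fun f => and_congr_right fun _ =>
    forall_congr' fun a => forall_congr' fun b => imp_congr (h _ _) Iff.rfl

end AuxWilfProof


/-- **Theorem 1.5.** For any two POPs `p` and `q`, `p + q ∼ q + p`. -/
theorem disjSum_comm_wilfEquiv {k l : ℕ} (p : POP k) (q : POP l) :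
    WilfEquiv (DisjSum p q) (DisjSum q p) := by
  intro n hn
  rcases Nat.eq_zero_or_pos k with hk | hk
  · subst hk
    refine avoiders_congr _ _ (by omega) (fun a b => ?_) n
    simp only [DisjSum]
    constructor
    · rintro (⟨ha, hb, h⟩ | ⟨ha, hb, h⟩)
      · have := p.supp _ _ h; omega
      · have := q.supp _ _ (show q.lt a b by simpa using h)
        exact Or.inl ⟨by omega, by omega, by simpa using h⟩
    · rintro (⟨ha, hb, h⟩ | ⟨ha, hb, h⟩)
      · have := q.supp _ _ h
        exact Or.inr ⟨by omega, by omega, by simpa using h⟩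
      · have := p.supp _ _ h; omega
  rcases Nat.eq_zero_or_pos l with hl | hl
  · subst hl
    refine avoiders_congr _ _ (by omega) (fun a b => ?_) n
    simp only [DisjSum]
    constructor
    · rintro (⟨ha, hb, h⟩ | ⟨ha, hb, h⟩)
      · have := p.supp _ _ h
        exact Or.inr ⟨by omega, by omega, by simpa using h⟩
      · have := q.supp _ _ h; omega
    · rintro (⟨ha, hb, h⟩ | ⟨ha, hb, h⟩)
      · have := q.supp _ _ h; omega
      · have := p.supp _ _ (show p.lt a b by simpa using h)
        exact Or.inl ⟨by omega, by omega, by simpa using h⟩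
  -- main case: k ≥ 1 and l ≥ 1
  have E1 := key_eq p q hk hl n
  have E2 := key_eq q p hl hk n
  have stepC : ∀ t ∈ Finset.range n,
      cnt n (fun π => ¬ OccIn p π 0 (t + 1) ∧ ¬ OccIn q π (t + 1) n)
      = cnt n (fun π => ¬ OccIn q π 0 (n - 1 - t) ∧ ¬ OccIn p π (n - 1 - t) n) := by
    intro t ht
    have ht' := Finset.mem_range.mp ht
    have h := cnt_c_symm (n := n) p q (t := t + 1) (by omega)
    have e : n - (t + 1) = n - 1 - t := by omega
    rw [e] at h
    exact h
  have hC : ∑ t ∈ Finset.range n, cnt n (fun π => ¬ OccIn p π 0 (t + 1) ∧ ¬ OccIn q π (t + 1) n)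
      = ∑ t ∈ Finset.range n, cnt n (fun π => ¬ OccIn q π 0 t ∧ ¬ OccIn p π t n) :=
    Eq.trans (Finset.sum_congr rfl stepC)
      (Finset.sum_range_reflect (fun s => cnt n (fun π => ¬ OccIn q π 0 s ∧ ¬ OccIn p π s n)) n)
  have stepD : ∀ t ∈ Finset.range n,
      cnt n (fun π => ¬ OccIn p π 0 t ∧ ¬ OccIn q π (t + 1) n)
      = cnt n (fun π => ¬ OccIn q π 0 (n - 1 - t) ∧ ¬ OccIn p π ((n - 1 - t) + 1) n) := by
    intro t ht
    have ht' := Finset.mem_range.mp ht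
    have h := cnt_d_symm (n := n) p q (t := t + 1) (by omega) (by omega)
    have e1 : n - (t + 1) = n - 1 - t := by omega
    have e2 : n + 1 - (t + 1) = (n - 1 - t) + 1 := by omega
    rw [e1, e2] at h
    exact h
  have hD : ∑ t ∈ Finset.range n, cnt n (fun π => ¬ OccIn p π 0 t ∧ ¬ OccIn q π (t + 1) n)
      = ∑ t ∈ Finset.range n, cnt n (fun π => ¬ OccIn q π 0 t ∧ ¬ OccIn p π (t + 1) n) :=
    Eq.trans (Finset.sum_congr rfl stepD)
      (Finset.sum_range_reflect (fun s => cnt n (fun π => ¬ OccIn q π 0 s ∧ ¬ OccIn p π (s + 1) n)) n)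
  have htot : (∑ t ∈ Finset.range n, cnt n (fun π => ¬ OccIn q π 0 t ∧ ¬ OccIn p π t n))
      + cnt n (fun π => ¬ OccIn q π 0 n ∧ ¬ OccIn p π n n)
      = (∑ t ∈ Finset.range n, cnt n (fun π => ¬ OccIn q π 0 (t + 1) ∧ ¬ OccIn p π (t + 1) n))
      + cnt n (fun π => ¬ OccIn q π 0 0 ∧ ¬ OccIn p π 0 n) :=
    Eq.trans
      (Finset.sum_range_succ (fun s => cnt n (fun π => ¬ OccIn q π 0 s ∧ ¬ OccIn p π s n)) n).symm
      (Finset.sum_range_succ' (fun s => cnt n (fun π => ¬ OccIn q π 0 s ∧ ¬ OccIn p π s n)) n)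
  have hc0 : cnt n (fun π => ¬ OccIn q π 0 0 ∧ ¬ OccIn p π 0 n)
      = cnt n (fun π => ¬ OccIn p π 0 n ∧ ¬ OccIn q π n n) := by
    refine cnt_congr fun π => ?_
    constructor
    · rintro ⟨-, h2⟩
      exact ⟨h2, not_occIn q hl le_rfl⟩
    · rintro ⟨h1, -⟩
      exact ⟨not_occIn q hl le_rfl, h1⟩
  omega
end

section
/- Let p, p' be POPs of size k whose sets of isolated labels are both equal to I, with k−2 ∉ I, such that in both p and p' every label in {1,…,k−2}∖I is strictly below k−1 and strictly below k. Suppose the restrictions of p and p' to {1,…,k−2}∖I coincide, that k is strictly below k−1 in p, and that k−1 is strictly below k in p'. Then p and p' are Wilf-equivalent. -/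
namespace WestWilfAux

open Finset

open Finset

variable {K n : ℕ} (S : Fin K → Prop) (R : Fin K → Fin K → Prop)

def Blue (π : Equiv.Perm (Fin n)) (i v : Fin n) : Prop :=
  ∃ f : Fin K → Fin n, StrictMono f ∧ (∀ a, f a < i) ∧
    (∀ a b, R a b → π (f a) < π (f b)) ∧ (∀ a, S a → π (f a) < v)

def OccA (π : Equiv.Perm (Fin n)) : Prop :=
  ∃ i1 i2 : Fin n, i1 < i2 ∧ π i2 < π i1 ∧ Blue S R π i1 (π i2)

def OccB (π : Equiv.Perm (Fin n)) : Prop :=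
  ∃ i1 i2 : Fin n, i1 < i2 ∧ π i1 < π i2 ∧ Blue S R π i1 (π i1)

variable {S R}

lemma blue_mono {π : Equiv.Perm (Fin n)} {i v i' v' : Fin n} (h : Blue S R π i v)
    (hi : i ≤ i') (hv : v ≤ v') : Blue S R π i' v' := by
  obtain ⟨f, h1, h2, h3, h4⟩ := h
  exact ⟨f, h1, fun a => lt_of_lt_of_le (h2 a) hi, h3,
    fun a ha => lt_of_lt_of_le (h4 a ha) hv⟩

lemma blue_white (hRS : ∀ a b, R a b → S a ∧ S b) {π : Equiv.Perm (Fin n)} {i v : Fin n}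
    (h : Blue S R π i v) :
    ∃ f : Fin K → Fin n, StrictMono f ∧ (∀ a, f a < i) ∧
      (∀ a b, R a b → π (f a) < π (f b)) ∧ (∀ a, S a → π (f a) < v) ∧
      (∀ a, S a → ¬ Blue S R π (f a) (π (f a))) := by
  obtain ⟨f, h1, h2, h3, h4⟩ := h
  have main : ∀ (N : ℕ) (f : Fin K → Fin n), (∀ a, S a → (π (f a) : ℕ) < N) →
      StrictMono f → (∀ a, f a < i) → (∀ a b, R a b → π (f a) < π (f b)) →
      (∀ a, S a → π (f a) < v) →
      ∃ f : Fin K → Fin n, StrictMono f ∧ (∀ a, f a < i) ∧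
        (∀ a b, R a b → π (f a) < π (f b)) ∧ (∀ a, S a → π (f a) < v) ∧
        (∀ a, S a → ¬ Blue S R π (f a) (π (f a))) := by
    intro N
    induction N with
    | zero => intro f hN h1 h2 h3 h4
              exact ⟨f, h1, h2, h3, h4, fun a ha => absurd (hN a ha) (by omega)⟩
    | succ N ih =>
      intro f hN h1 h2 h3 h4
      by_cases hex : ∃ a, S a ∧ Blue S R π (f a) (π (f a))
      · obtain ⟨a0, hS0, g, hg1, hg2, hg3, hg4⟩ := hex
        refine ih g (fun a ha => ?_) hg1 (fun a => lt_trans (hg2 a) (h2 a0)) hg3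
          (fun a ha => lt_trans (hg4 a ha) (h4 a0 hS0))
        have := hg4 a ha
        have h5 := hN a0 hS0
        have : (π (g a) : ℕ) < (π (f a0) : ℕ) := this
        omega
      · push_neg at hex
        exact ⟨f, h1, h2, h3, h4, fun a ha hb => hex a ha hb⟩
  exact main ((v : ℕ)) f (fun a ha => h4 a ha) h1 h2 h3 h4

def Rel (S : Fin K → Prop) (R : Fin K → Fin K → Prop) (π π' : Equiv.Perm (Fin n)) : Prop :=
  (∀ j, ¬ Blue S R π j (π j) → π' j = π j) ∧
  (∀ j, Blue S R π j (π j) → Blue S R π j (π' j))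

lemma rel_refl (π : Equiv.Perm (Fin n)) : Rel S R π π :=
  ⟨fun _ _ => rfl, fun _ hb => hb⟩

lemma rel_blue (hRS : ∀ a b, R a b → S a ∧ S b) {π π' : Equiv.Perm (Fin n)}
    (h : Rel S R π π') {i v : Fin n} : Blue S R π i v ↔ Blue S R π' i v := by
  constructor
  · intro hb
    obtain ⟨f, h1, h2, h3, h4, h5⟩ := blue_white hRS hb
    refine ⟨f, h1, h2, fun a b hab => ?_, fun a ha => ?_⟩
    · rw [h.1 _ (h5 a (hRS a b hab).1), h.1 _ (h5 b (hRS a b hab).2)]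
      exact h3 a b hab
    · rw [h.1 _ (h5 a ha)]; exact h4 a ha
  · rintro ⟨f, h1, h2, h3, h4⟩
    by_cases hex : ∃ a, S a ∧ Blue S R π (f a) (π (f a))
    · obtain ⟨a0, hS0, hb0⟩ := hex
      exact blue_mono (h.2 _ hb0) (h2 a0).le (h4 a0 hS0).le
    · push_neg at hex
      refine ⟨f, h1, h2, fun a b hab => ?_, fun a ha => ?_⟩
      · rw [← h.1 _ (hex a (hRS a b hab).1), ← h.1 _ (hex b (hRS a b hab).2)]
        exact h3 a b hab
      · rw [← h.1 _ (hex a ha)]; exact h4 a ha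

lemma rel_dot (hRS : ∀ a b, R a b → S a ∧ S b) {π π' : Equiv.Perm (Fin n)}
    (h : Rel S R π π') (j : Fin n) :
    Blue S R π' j (π' j) ↔ Blue S R π j (π j) := by
  constructor
  · intro hb
    have hb' : Blue S R π j (π' j) := (rel_blue hRS h).mpr hb
    by_contra hw
    rw [h.1 j hw] at hb'
    exact hw hb'
  · intro hb
    exact (rel_blue hRS h).mp (h.2 j hb)

lemma rel_symm (hRS : ∀ a b, R a b → S a ∧ S b) {π π' : Equiv.Perm (Fin n)}
    (h : Rel S R π π') : Rel S R π' π := by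
  constructor
  · intro j hw
    exact (h.1 j (fun hb => hw ((rel_dot hRS h j).mpr hb))).symm
  · intro j hb
    have hbj : Blue S R π j (π j) := (rel_dot hRS h j).mp hb
    exact (rel_blue hRS h).mp hbj

lemma rel_trans (hRS : ∀ a b, R a b → S a ∧ S b) {π π' π'' : Equiv.Perm (Fin n)}
    (h : Rel S R π π') (h' : Rel S R π' π'') : Rel S R π π'' := by
  constructor
  · intro j hw
    have hw' : ¬ Blue S R π' j (π' j) := fun hb => hw ((rel_dot hRS h j).mp hb)
    rw [h'.1 j hw']
    exact h.1 j hw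
  · intro j hb
    have hb' : Blue S R π' j (π' j) := (rel_dot hRS h j).mpr hb
    exact (rel_blue hRS h).mpr (h'.2 j hb')



def pot (π : Equiv.Perm (Fin n)) : ℕ := ∑ j : Fin n, (j : ℕ) * (π j : ℕ)

lemma sum_split (i1 i2 : Fin n) (h : i1 ≠ i2) (f : Fin n → ℕ) :
    ∑ j, f j = f i1 + f i2 + ∑ j ∈ (Finset.univ.erase i1).erase i2, f j := by
  have h1 : f i1 + ∑ j ∈ Finset.univ.erase i1, f j = ∑ j, f j :=
    Finset.add_sum_erase _ f (mem_univ i1)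
  have h2 : f i2 + ∑ j ∈ (Finset.univ.erase i1).erase i2, f j
      = ∑ j ∈ Finset.univ.erase i1, f j :=
    Finset.add_sum_erase _ f (by simp [h.symm, Ne.symm h])
  omega

lemma swap_pot {π : Equiv.Perm (Fin n)} {i1 i2 : Fin n} (hlt : i1 < i2) :
    pot ((Equiv.swap i1 i2).trans π) + (i1 : ℕ) * (π i1 : ℕ) + (i2 : ℕ) * (π i2 : ℕ)
    = pot π + (i1 : ℕ) * (π i2 : ℕ) + (i2 : ℕ) * (π i1 : ℕ) := by
  have hne : i1 ≠ i2 := ne_of_lt hlt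
  set π' := (Equiv.swap i1 i2).trans π with hπ'
  have e1 : π' i1 = π i2 := by simp [hπ', Equiv.swap_apply_left]
  have e2 : π' i2 = π i1 := by simp [hπ', Equiv.swap_apply_right]
  have e3 : ∀ j, j ≠ i1 → j ≠ i2 → π' j = π j := by
    intro j hj1 hj2; simp [hπ', Equiv.swap_apply_of_ne_of_ne hj1 hj2]
  have s1 := sum_split i1 i2 hne (fun j => (j : ℕ) * (π' j : ℕ))
  have s2 := sum_split i1 i2 hne (fun j => (j : ℕ) * (π j : ℕ))
  have s3 : ∑ j ∈ (Finset.univ.erase i1).erase i2, (j : ℕ) * (π' j : ℕ)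
      = ∑ j ∈ (Finset.univ.erase i1).erase i2, (j : ℕ) * (π j : ℕ) := by
    refine Finset.sum_congr rfl fun j hj => ?_
    simp only [Finset.mem_erase] at hj
    rw [e3 j hj.2.1 hj.1]
  simp only [pot, e1, e2] at s1 s2 ⊢
  omega

lemma prod_ineq {a b c d : ℕ} (hab : a < b) (hdc : d < c) :
    a * c + b * d < a * d + b * c := by
  obtain ⟨s, rfl⟩ : ∃ s, b = a + s + 1 := ⟨b - a - 1, by omega⟩
  obtain ⟨t, rfl⟩ : ∃ t, c = d + t + 1 := ⟨c - d - 1, by omega⟩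
  ring_nf
  nlinarith


variable {K n : ℕ} {S : Fin K → Prop} {R : Fin K → Fin K → Prop}

lemma swap_rel_A {π : Equiv.Perm (Fin n)} (h : OccA S R π) :
    ∃ π', Rel S R π π' ∧ pot π < pot π' := by
  obtain ⟨i1, i2, hlt, hd, hb⟩ := h
  set π' := (Equiv.swap i1 i2).trans π with hπ'
  have hne : i1 ≠ i2 := ne_of_lt hlt
  have e1 : π' i1 = π i2 := by simp [hπ', Equiv.swap_apply_left]
  have e2 : π' i2 = π i1 := by simp [hπ', Equiv.swap_apply_right]
  have e3 : ∀ j, j ≠ i1 → j ≠ i2 → π' j = π j := by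
    intro j hj1 hj2; simp [hπ', Equiv.swap_apply_of_ne_of_ne hj1 hj2]
  have hb1 : Blue S R π i1 (π i1) := blue_mono hb le_rfl hd.le
  have hb2 : Blue S R π i2 (π i2) := blue_mono hb hlt.le le_rfl
  refine ⟨π', ⟨?_, ?_⟩, ?_⟩
  · intro j hw
    refine e3 j (fun hj => ?_) (fun hj => ?_)
    · exact hw (hj ▸ hb1)
    · exact hw (hj ▸ hb2)
  · intro j hbj
    rcases eq_or_ne j i1 with rfl | hj1
    · rw [e1]; exact hb
    rcases eq_or_ne j i2 with rfl | hj2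
    · rw [e2]; exact blue_mono hb hlt.le hd.le
    · rw [e3 j hj1 hj2]; exact hbj
  · have hsp := swap_pot (π := π) hlt
    rw [← hπ'] at hsp
    have hi : (i1 : ℕ) < (i2 : ℕ) := hlt
    have hv : (π i2 : ℕ) < (π i1 : ℕ) := hd
    have := prod_ineq hi hv
    omega

lemma swap_rel_B {π : Equiv.Perm (Fin n)} (h : OccB S R π) :
    ∃ π', Rel S R π π' ∧ pot π' < pot π := by
  obtain ⟨i1, i2, hlt, ha, hb⟩ := h
  set π' := (Equiv.swap i1 i2).trans π with hπ'
  have e1 : π' i1 = π i2 := by simp [hπ', Equiv.swap_apply_left]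
  have e2 : π' i2 = π i1 := by simp [hπ', Equiv.swap_apply_right]
  have e3 : ∀ j, j ≠ i1 → j ≠ i2 → π' j = π j := by
    intro j hj1 hj2; simp [hπ', Equiv.swap_apply_of_ne_of_ne hj1 hj2]
  have hb2 : Blue S R π i2 (π i2) := blue_mono hb hlt.le ha.le
  refine ⟨π', ⟨?_, ?_⟩, ?_⟩
  · intro j hw
    refine e3 j (fun hj => ?_) (fun hj => ?_)
    · exact hw (hj ▸ hb)
    · exact hw (hj ▸ hb2)
  · intro j hbj
    rcases eq_or_ne j i1 with rfl | hj1
    · rw [e1]; exact blue_mono hb le_rfl ha.le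
    rcases eq_or_ne j i2 with rfl | hj2
    · rw [e2]; exact blue_mono hb hlt.le le_rfl
    · rw [e3 j hj1 hj2]; exact hbj
  · have hsp := swap_pot (π := π) hlt
    rw [← hπ'] at hsp
    have hi : (i1 : ℕ) < (i2 : ℕ) := hlt
    have hv : (π i1 : ℕ) < (π i2 : ℕ) := ha
    have := prod_ineq hi hv
    omega

lemma uniqA (hRS : ∀ a b, R a b → S a ∧ S b) {π1 π2 : Equiv.Perm (Fin n)}
    (hrel : Rel S R π1 π2) (h1 : ¬ OccA S R π1) (h2 : ¬ OccA S R π2) : π1 = π2 := by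
  classical
  by_contra hne
  have hne' : ∃ j, π1 j ≠ π2 j := by
    by_contra hall
    push_neg at hall
    exact hne (Equiv.ext hall)
  set D : Finset (Fin n) := Finset.univ.filter (fun j => π1 j ≠ π2 j) with hD
  have hDne : D.Nonempty := by
    obtain ⟨j, hj⟩ := hne'
    exact ⟨j, by simp [hD, hj]⟩
  set j0 := D.min' hDne with hj0
  have hj0D : j0 ∈ D := D.min'_mem hDne
  have hj0ne : π1 j0 ≠ π2 j0 := by simpa [hD] using hj0D
  have hmin : ∀ j, j < j0 → π1 j = π2 j := by
    intro j hj
    by_contra hne2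
    exact absurd (D.min'_le j (by simp [hD, hne2])) (not_le.mpr hj)
  have hblue : Blue S R π1 j0 (π1 j0) := by
    by_contra hw
    exact hj0ne (hrel.1 j0 hw).symm
  rcases lt_or_gt_of_ne hj0ne with hc | hc
  · -- π1 j0 < π2 j0 : find descent in π2
    set v := π1 j0 with hv
    set j2 := π2.symm v with hj2
    have hval : π2 j2 = v := π2.apply_symm_apply v
    have hj2ne : j2 ≠ j0 := by
      intro hEq
      rw [hEq] at hval
      exact absurd hval.symm (ne_of_lt hc)
    have hgt : j0 < j2 := by
      rcases lt_or_gt_of_ne hj2ne with hl | hg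
      · exfalso
        have := hmin j2 hl
        have : π1 j2 = π1 j0 := by rw [this, hval]
        exact hj2ne (π1.injective this)
      · exact hg
    refine h2 ⟨j0, j2, hgt, ?_, ?_⟩
    · rw [hval]; exact hc
    · rw [hval]
      exact (rel_blue hRS hrel).mp hblue
  · -- π2 j0 < π1 j0 : find descent in π1
    set v := π2 j0 with hv
    set j2 := π1.symm v with hj2
    have hval : π1 j2 = v := π1.apply_symm_apply v
    have hj2ne : j2 ≠ j0 := by
      intro hEq
      rw [hEq] at hval
      exact absurd hval (ne_of_gt hc)
    have hgt : j0 < j2 := by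
      rcases lt_or_gt_of_ne hj2ne with hl | hg
      · exfalso
        have h5 := hmin j2 hl
        have : π2 j2 = π2 j0 := by rw [← h5, hval]
        exact hj2ne (π2.injective this)
      · exact hg
    refine h1 ⟨j0, j2, hgt, ?_, ?_⟩
    · rw [hval]; exact hc
    · rw [hval]
      exact hrel.2 j0 hblue

lemma uniqB (hRS : ∀ a b, R a b → S a ∧ S b) {π1 π2 : Equiv.Perm (Fin n)}
    (hrel : Rel S R π1 π2) (h1 : ¬ OccB S R π1) (h2 : ¬ OccB S R π2) : π1 = π2 := by
  classical
  by_contra hne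
  have hne' : ∃ j, π1 j ≠ π2 j := by
    by_contra hall
    push_neg at hall
    exact hne (Equiv.ext hall)
  set D : Finset (Fin n) := Finset.univ.filter (fun j => π1 j ≠ π2 j) with hD
  have hDne : D.Nonempty := by
    obtain ⟨j, hj⟩ := hne'
    exact ⟨j, by simp [hD, hj]⟩
  set j0 := D.min' hDne with hj0
  have hj0D : j0 ∈ D := D.min'_mem hDne
  have hj0ne : π1 j0 ≠ π2 j0 := by simpa [hD] using hj0D
  have hmin : ∀ j, j < j0 → π1 j = π2 j := by
    intro j hj
    by_contra hne2
    exact absurd (D.min'_le j (by simp [hD, hne2])) (not_le.mpr hj)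
  have hblue : Blue S R π1 j0 (π1 j0) := by
    by_contra hw
    exact hj0ne (hrel.1 j0 hw).symm
  have hblue2 : Blue S R π2 j0 (π2 j0) := (rel_dot hRS hrel j0).mpr hblue
  rcases lt_or_gt_of_ne hj0ne with hc | hc
  · -- π1 j0 < π2 j0 : find ascent in π1
    set v := π2 j0 with hv
    set j2 := π1.symm v with hj2
    have hval : π1 j2 = v := π1.apply_symm_apply v
    have hj2ne : j2 ≠ j0 := by
      intro hEq
      rw [hEq] at hval
      exact absurd hval (ne_of_lt hc)
    have hgt : j0 < j2 := by
      rcases lt_or_gt_of_ne hj2ne with hl | hg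
      · exfalso
        have h5 := hmin j2 hl
        have : π2 j2 = π2 j0 := by rw [← h5, hval]
        exact hj2ne (π2.injective this)
      · exact hg
    refine h1 ⟨j0, j2, hgt, ?_, hblue⟩
    rw [hval]; exact hc
  · -- π2 j0 < π1 j0 : find ascent in π2
    set v := π1 j0 with hv
    set j2 := π2.symm v with hj2
    have hval : π2 j2 = v := π2.apply_symm_apply v
    have hj2ne : j2 ≠ j0 := by
      intro hEq
      rw [hEq] at hval
      exact absurd hval.symm (ne_of_gt hc)
    have hgt : j0 < j2 := by
      rcases lt_or_gt_of_ne hj2ne with hl | hg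
      · exfalso
        have h5 := hmin j2 hl
        have : π1 j2 = π1 j0 := by rw [h5, hval]
        exact hj2ne (π1.injective this)
      · exact hg
    refine h2 ⟨j0, j2, hgt, ?_, hblue2⟩
    rw [hval]; exact hc

lemma exists_relB (hRS : ∀ a b, R a b → S a ∧ S b) (π : Equiv.Perm (Fin n)) :
    ∃ σ, Rel S R π σ ∧ ¬ OccB S R σ := by
  classical
  set T : Finset (Equiv.Perm (Fin n)) := Finset.univ.filter (fun σ => Rel S R π σ) with hT
  have hπT : π ∈ T := by simp [hT, rel_refl]
  obtain ⟨σ, hσT, hmin⟩ := T.exists_min_image pot ⟨π, hπT⟩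
  have hσ : Rel S R π σ := by simpa [hT] using hσT
  refine ⟨σ, hσ, fun hocc => ?_⟩
  obtain ⟨σ', hrel', hlt⟩ := swap_rel_B hocc
  have hσ'T : σ' ∈ T := by
    simp only [hT, Finset.mem_filter, Finset.mem_univ, true_and]
    exact rel_trans hRS hσ hrel'
  have := hmin σ' hσ'T
  omega

lemma exists_relA (hRS : ∀ a b, R a b → S a ∧ S b) (π : Equiv.Perm (Fin n)) :
    ∃ σ, Rel S R π σ ∧ ¬ OccA S R σ := by
  classical
  set T : Finset (Equiv.Perm (Fin n)) := Finset.univ.filter (fun σ => Rel S R π σ) with hT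
  have hπT : π ∈ T := by simp [hT, rel_refl]
  obtain ⟨σ, hσT, hmax⟩ := T.exists_max_image pot ⟨π, hπT⟩
  have hσ : Rel S R π σ := by simpa [hT] using hσT
  refine ⟨σ, hσ, fun hocc => ?_⟩
  obtain ⟨σ', hrel', hlt⟩ := swap_rel_A hocc
  have hσ'T : σ' ∈ T := by
    simp only [hT, Finset.mem_filter, Finset.mem_univ, true_and]
    exact rel_trans hRS hσ hrel'
  have := hmax σ' hσ'T
  omega

theorem core (hRS : ∀ a b, R a b → S a ∧ S b) :
    Nat.card {π : Equiv.Perm (Fin n) // ¬ OccA S R π}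
      = Nat.card {π : Equiv.Perm (Fin n) // ¬ OccB S R π} := by
  refine Nat.card_congr ?_
  refine
    { toFun := fun x => ⟨Classical.choose (exists_relB hRS x.1),
        (Classical.choose_spec (exists_relB hRS x.1)).2⟩
      invFun := fun y => ⟨Classical.choose (exists_relA hRS y.1),
        (Classical.choose_spec (exists_relA hRS y.1)).2⟩
      left_inv := ?_
      right_inv := ?_ }
  · rintro ⟨π, hπ⟩
    apply Subtype.ext
    dsimp only
    have hB := Classical.choose_spec (exists_relB hRS π)
    set σB := Classical.choose (exists_relB hRS π)
    have hA := Classical.choose_spec (exists_relA hRS σB)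
    set σA := Classical.choose (exists_relA hRS σB)
    have hrel : Rel S R π σA := rel_trans hRS hB.1 hA.1
    exact (uniqA hRS hrel hπ hA.2).symm
  · rintro ⟨π, hπ⟩
    apply Subtype.ext
    dsimp only
    have hA := Classical.choose_spec (exists_relA hRS π)
    set σA := Classical.choose (exists_relA hRS π)
    have hB := Classical.choose_spec (exists_relB hRS σA)
    set σB := Classical.choose (exists_relB hRS σA)
    have hrel : Rel S R π σB := rel_trans hRS hA.1 hB.1
    exact (uniqB hRS hrel hπ hB.2).symm


variable {k : ℕ} {p p' : POP k} {I : Finset ℕ}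

lemma two_le_k (hp : p.lt k (k-1)) : 2 ≤ k := by
  have := p.supp _ _ hp; omega

lemma not_mem_I_left (hIp : ∀ i, p.Isolated i ↔ i ∈ I) {a b : ℕ} (h : p.lt a b) : a ∉ I :=
  fun hm => (((hIp a).mpr hm).2.2 b).1 h

lemma not_mem_I_right (hIp : ∀ i, p.Isolated i ↔ i ∈ I) {a b : ℕ} (h : p.lt a b) : b ∉ I :=
  fun hm => (((hIp b).mpr hm).2.2 a).2 h

lemma char_p (hIp : ∀ i, p.Isolated i ↔ i ∈ I)
    (hbelow : ∀ x, 1 ≤ x → x ≤ k - 2 → x ∉ I →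
      p.lt x (k - 1) ∧ p.lt x k ∧ p'.lt x (k - 1) ∧ p'.lt x k)
    (hp : p.lt k (k-1)) :
    ∀ a b : ℕ, p.lt a b ↔
      ((1 ≤ a ∧ a ≤ k-2 ∧ b ≤ k-2 ∧ p.lt a b) ∨
       (1 ≤ a ∧ a ≤ k-2 ∧ a ∉ I ∧ (b = k-1 ∨ b = k)) ∨
       (a = k ∧ b = k-1)) := by
  have hk := two_le_k hp
  intro a b
  constructor
  · intro h
    have hs := p.supp _ _ h
    have haI := not_mem_I_left hIp h
    have hbI := not_mem_I_right hIp h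
    by_cases ha2 : a ≤ k - 2
    · by_cases hb2 : b ≤ k - 2
      · exact Or.inl ⟨hs.1, ha2, hb2, h⟩
      · exact Or.inr (Or.inl ⟨hs.1, ha2, haI, by omega⟩)
    · have ha : a = k - 1 ∨ a = k := by omega
      rcases ha with ha | ha
      · exfalso
        rw [ha] at h
        by_cases hb2 : b ≤ k - 2
        · have hb := (hbelow b (by omega) hb2 hbI).1
          exact p.irrefl _ (p.trans _ _ _ h hb)
        · have hb : b = k - 1 ∨ b = k := by omega
          rcases hb with hb | hb <;> rw [hb] at h
          · exact p.irrefl _ h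
          · exact p.irrefl _ (p.trans _ _ _ h hp)
      · rw [ha] at h
        by_cases hb2 : b ≤ k - 2
        · exfalso
          have hb := (hbelow b (by omega) hb2 hbI).2.1
          exact p.irrefl _ (p.trans _ _ _ h hb)
        · have hb : b = k - 1 ∨ b = k := by omega
          rcases hb with hb | hb
          · exact Or.inr (Or.inr ⟨ha, hb⟩)
          · rw [hb] at h; exact absurd h (p.irrefl _)
  · rintro (⟨_, _, _, h⟩ | ⟨h1, h2, h3, hb | hb⟩ | ⟨ha, hb⟩)
    · exact h
    · rw [hb]; exact (hbelow a h1 h2 h3).1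
    · rw [hb]; exact (hbelow a h1 h2 h3).2.1
    · rw [ha, hb]; exact hp

lemma char_p' (hIp : ∀ i, p.Isolated i ↔ i ∈ I) (hIp' : ∀ i, p'.Isolated i ↔ i ∈ I)
    (hbelow : ∀ x, 1 ≤ x → x ≤ k - 2 → x ∉ I →
      p.lt x (k - 1) ∧ p.lt x k ∧ p'.lt x (k - 1) ∧ p'.lt x k)
    (hres : ∀ a b, a ≤ k - 2 → b ≤ k - 2 → a ∉ I → b ∉ I → (p.lt a b ↔ p'.lt a b))
    (hp : p.lt k (k-1)) (hp' : p'.lt (k-1) k) :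
    ∀ a b : ℕ, p'.lt a b ↔
      ((1 ≤ a ∧ a ≤ k-2 ∧ b ≤ k-2 ∧ p.lt a b) ∨
       (1 ≤ a ∧ a ≤ k-2 ∧ a ∉ I ∧ (b = k-1 ∨ b = k)) ∨
       (a = k-1 ∧ b = k)) := by
  have hk := two_le_k hp
  intro a b
  constructor
  · intro h
    have hs := p'.supp _ _ h
    have haI := not_mem_I_left hIp' h
    have hbI := not_mem_I_right hIp' h
    by_cases ha2 : a ≤ k - 2
    · by_cases hb2 : b ≤ k - 2
      · exact Or.inl ⟨hs.1, ha2, hb2, (hres a b ha2 hb2 haI hbI).mpr h⟩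
      · exact Or.inr (Or.inl ⟨hs.1, ha2, haI, by omega⟩)
    · have ha : a = k - 1 ∨ a = k := by omega
      rcases ha with ha | ha
      · rw [ha] at h
        by_cases hb2 : b ≤ k - 2
        · exfalso
          have hb := (hbelow b (by omega) hb2 hbI).2.2.1
          exact p'.irrefl _ (p'.trans _ _ _ h hb)
        · have hb : b = k - 1 ∨ b = k := by omega
          rcases hb with hb | hb
          · rw [hb] at h; exact absurd h (p'.irrefl _)
          · exact Or.inr (Or.inr ⟨ha, hb⟩)
      · exfalso
        rw [ha] at h
        by_cases hb2 : b ≤ k - 2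
        · have hb := (hbelow b (by omega) hb2 hbI).2.2.2
          exact p'.irrefl _ (p'.trans _ _ _ h hb)
        · have hb : b = k - 1 ∨ b = k := by omega
          rcases hb with hb | hb <;> rw [hb] at h
          · exact p'.irrefl _ (p'.trans _ _ _ h hp')
          · exact p'.irrefl _ h
  · rintro (⟨_, ha2, hb2, h⟩ | ⟨h1, h2, h3, hb | hb⟩ | ⟨ha, hb⟩)
    · exact (hres a b ha2 hb2 (not_mem_I_left hIp h) (not_mem_I_right hIp h)).mp h
    · rw [hb]; exact (hbelow a h1 h2 h3).2.2.1
    · rw [hb]; exact (hbelow a h1 h2 h3).2.2.2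
    · rw [ha, hb]; exact hp'

lemma occ_iff_A (hIp : ∀ i, p.Isolated i ↔ i ∈ I)
    (hbelow : ∀ x, 1 ≤ x → x ≤ k - 2 → x ∉ I →
      p.lt x (k - 1) ∧ p.lt x k ∧ p'.lt x (k - 1) ∧ p'.lt x k)
    (hp : p.lt k (k-1)) {n : ℕ} (π : Equiv.Perm (Fin n)) :
    p.Occurs π ↔ OccA (fun a : Fin (k-2) => ((a:ℕ)+1) ∉ I)
      (fun a b : Fin (k-2) => p.lt ((a:ℕ)+1) ((b:ℕ)+1)) π := by
  have hk := two_le_k hp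
  constructor
  · rintro ⟨f, hmono, hof⟩
    refine ⟨f ⟨k-2, by omega⟩, f ⟨k-1, by omega⟩,
      hmono (by simp only [Fin.mk_lt_mk]; omega), ?_, ?_⟩
    · apply hof
      show p.lt ((k-1) + 1) ((k-2) + 1)
      have e1 : k - 1 + 1 = k := by omega
      have e2 : k - 2 + 1 = k - 1 := by omega
      rw [e1, e2]; exact hp
    · refine ⟨fun a => f ⟨(a:ℕ), by omega⟩, ?_, ?_, ?_, ?_⟩
      · intro a b hab
        exact hmono (by simp only [Fin.mk_lt_mk]; exact hab)
      · intro a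
        exact hmono (by simp only [Fin.mk_lt_mk]; exact a.isLt)
      · intro a b hab
        exact hof ⟨(a:ℕ), by omega⟩ ⟨(b:ℕ), by omega⟩ hab
      · intro a ha
        apply hof ⟨(a:ℕ), by omega⟩ ⟨k-1, by omega⟩
        show p.lt ((a:ℕ) + 1) ((k-1) + 1)
        have e1 : k - 1 + 1 = k := by omega
        rw [e1]
        exact (hbelow ((a:ℕ)+1) (by omega) (by omega) ha).2.1
  · rintro ⟨i1, i2, hlt, hd, g, hg1, hg2, hg3, hg4⟩
    set F : Fin k → Fin n := fun j =>
      if h : (j:ℕ) < k-2 then g ⟨(j:ℕ), h⟩ else if (j:ℕ) = k-2 then i1 else i2 with hF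
    have hF1 : ∀ (j : Fin k) (h : (j:ℕ) < k-2), F j = g ⟨(j:ℕ), h⟩ := fun j h => dif_pos h
    have hF2 : ∀ (j : Fin k), (j:ℕ) = k-2 → F j = i1 := by
      intro j h; simp only [hF]; rw [dif_neg (by omega), if_pos h]
    have hF3 : ∀ (j : Fin k), (j:ℕ) = k-1 → F j = i2 := by
      intro j h; simp only [hF]; rw [dif_neg (by omega), if_neg (by omega)]
    refine ⟨F, ?_, ?_⟩
    · intro a b hab
      have hab' : (a:ℕ) < (b:ℕ) := hab
      have hbk : (b:ℕ) < k := b.isLt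
      by_cases ha : (a:ℕ) < k-2
      · rw [hF1 a ha]
        by_cases hb : (b:ℕ) < k-2
        · rw [hF1 b hb]
          exact hg1 (show (⟨(a:ℕ),ha⟩ : Fin (k-2)) < ⟨(b:ℕ),hb⟩ by
            simp only [Fin.mk_lt_mk]; exact hab')
        · by_cases hbe : (b:ℕ) = k-2
          · rw [hF2 b hbe]; exact hg2 _
          · rw [hF3 b (by omega)]; exact lt_trans (hg2 _) hlt
      · by_cases hae : (a:ℕ) = k-2
        · rw [hF2 a hae, hF3 b (by omega)]; exact hlt
        · exfalso; omega
    · intro a b hab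
      rcases (char_p hIp hbelow hp ((a:ℕ)+1) ((b:ℕ)+1)).mp hab with
        ⟨_, ha2, hb2, hcore⟩ | ⟨h1, h2, h3, hb | hb⟩ | ⟨hae, hbe⟩
      · rw [hF1 a (by omega), hF1 b (by omega)]
        exact hg3 ⟨(a:ℕ), by omega⟩ ⟨(b:ℕ), by omega⟩ hcore
      · rw [hF1 a (by omega), hF2 b (by omega)]
        exact lt_trans (hg4 ⟨(a:ℕ), by omega⟩ h3) hd
      · rw [hF1 a (by omega), hF3 b (by omega)]
        exact hg4 ⟨(a:ℕ), by omega⟩ h3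
      · rw [hF3 a (by omega), hF2 b (by omega)]
        exact hd

lemma occ_iff_B (hIp : ∀ i, p.Isolated i ↔ i ∈ I) (hIp' : ∀ i, p'.Isolated i ↔ i ∈ I)
    (hbelow : ∀ x, 1 ≤ x → x ≤ k - 2 → x ∉ I →
      p.lt x (k - 1) ∧ p.lt x k ∧ p'.lt x (k - 1) ∧ p'.lt x k)
    (hres : ∀ a b, a ≤ k - 2 → b ≤ k - 2 → a ∉ I → b ∉ I → (p.lt a b ↔ p'.lt a b))
    (hp : p.lt k (k-1)) (hp' : p'.lt (k-1) k) {n : ℕ} (π : Equiv.Perm (Fin n)) :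
    p'.Occurs π ↔ OccB (fun a : Fin (k-2) => ((a:ℕ)+1) ∉ I)
      (fun a b : Fin (k-2) => p.lt ((a:ℕ)+1) ((b:ℕ)+1)) π := by
  have hk := two_le_k hp
  constructor
  · rintro ⟨f, hmono, hof⟩
    refine ⟨f ⟨k-2, by omega⟩, f ⟨k-1, by omega⟩,
      hmono (by simp only [Fin.mk_lt_mk]; omega), ?_, ?_⟩
    · apply hof
      show p'.lt ((k-2) + 1) ((k-1) + 1)
      have e1 : k - 1 + 1 = k := by omega
      have e2 : k - 2 + 1 = k - 1 := by omega
      rw [e1, e2]; exact hp'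
    · refine ⟨fun a => f ⟨(a:ℕ), by omega⟩, ?_, ?_, ?_, ?_⟩
      · intro a b hab
        exact hmono (by simp only [Fin.mk_lt_mk]; exact hab)
      · intro a
        exact hmono (by simp only [Fin.mk_lt_mk]; exact a.isLt)
      · intro a b hab
        apply hof ⟨(a:ℕ), by omega⟩ ⟨(b:ℕ), by omega⟩
        show p'.lt ((a:ℕ) + 1) ((b:ℕ) + 1)
        exact (hres _ _ (by omega) (by omega) (not_mem_I_left hIp hab)
          (not_mem_I_right hIp hab)).mp hab
      · intro a ha
        apply hof ⟨(a:ℕ), by omega⟩ ⟨k-2, by omega⟩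
        show p'.lt ((a:ℕ) + 1) ((k-2) + 1)
        have e2 : k - 2 + 1 = k - 1 := by omega
        rw [e2]
        exact (hbelow ((a:ℕ)+1) (by omega) (by omega) ha).2.2.1
  · rintro ⟨i1, i2, hlt, hasc, g, hg1, hg2, hg3, hg4⟩
    set F : Fin k → Fin n := fun j =>
      if h : (j:ℕ) < k-2 then g ⟨(j:ℕ), h⟩ else if (j:ℕ) = k-2 then i1 else i2 with hF
    have hF1 : ∀ (j : Fin k) (h : (j:ℕ) < k-2), F j = g ⟨(j:ℕ), h⟩ := fun j h => dif_pos h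
    have hF2 : ∀ (j : Fin k), (j:ℕ) = k-2 → F j = i1 := by
      intro j h; simp only [hF]; rw [dif_neg (by omega), if_pos h]
    have hF3 : ∀ (j : Fin k), (j:ℕ) = k-1 → F j = i2 := by
      intro j h; simp only [hF]; rw [dif_neg (by omega), if_neg (by omega)]
    refine ⟨F, ?_, ?_⟩
    · intro a b hab
      have hab' : (a:ℕ) < (b:ℕ) := hab
      have hbk : (b:ℕ) < k := b.isLt
      by_cases ha : (a:ℕ) < k-2
      · rw [hF1 a ha]
        by_cases hb : (b:ℕ) < k-2
        · rw [hF1 b hb]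
          exact hg1 (show (⟨(a:ℕ),ha⟩ : Fin (k-2)) < ⟨(b:ℕ),hb⟩ by
            simp only [Fin.mk_lt_mk]; exact hab')
        · by_cases hbe : (b:ℕ) = k-2
          · rw [hF2 b hbe]; exact hg2 _
          · rw [hF3 b (by omega)]; exact lt_trans (hg2 _) hlt
      · by_cases hae : (a:ℕ) = k-2
        · rw [hF2 a hae, hF3 b (by omega)]; exact hlt
        · exfalso; omega
    · intro a b hab
      rcases (char_p' hIp hIp' hbelow hres hp hp' ((a:ℕ)+1) ((b:ℕ)+1)).mp hab with
        ⟨_, ha2, hb2, hcore⟩ | ⟨h1, h2, h3, hb | hb⟩ | ⟨hae, hbe⟩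
      · rw [hF1 a (by omega), hF1 b (by omega)]
        exact hg3 ⟨(a:ℕ), by omega⟩ ⟨(b:ℕ), by omega⟩ hcore
      · rw [hF1 a (by omega), hF2 b (by omega)]
        exact hg4 ⟨(a:ℕ), by omega⟩ h3
      · rw [hF1 a (by omega), hF3 b (by omega)]
        exact lt_trans (hg4 ⟨(a:ℕ), by omega⟩ h3) hasc
      · rw [hF2 a (by omega), hF3 b (by omega)]
        exact hasc


end WestWilfAux

/-- **Lemma 2.3.** Let `p, p'` be POPs of size `k` with the same set `I` of isolated
labels, `k−2 ∉ I`, in both of which every label of `{1,…,k−2} \\ I` is strictly below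
`k−1` and below `k`, with coinciding restrictions to `{1,…,k−2} \\ I`, and with `k`
below `k−1` in `p` while `k−1` is below `k` in `p'`. Then `p ∼ p'`. -/
theorem wilfEquiv_from_west {k : ℕ} (p p' : POP k) (I : Finset ℕ)
    (hIp : ∀ i, p.Isolated i ↔ i ∈ I)
    (hIp' : ∀ i, p'.Isolated i ↔ i ∈ I)
    (hk2 : k - 2 ∉ I)
    (hbelow : ∀ x, 1 ≤ x → x ≤ k - 2 → x ∉ I →
      p.lt x (k - 1) ∧ p.lt x k ∧ p'.lt x (k - 1) ∧ p'.lt x k)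
    (hres : ∀ a b, a ≤ k - 2 → b ≤ k - 2 → a ∉ I → b ∉ I → (p.lt a b ↔ p'.lt a b))
    (hp : p.lt k (k - 1)) (hp' : p'.lt (k - 1) k) :
    WilfEquiv p p' := by
  intro n _
  have hRS : ∀ a b : Fin (k-2),
      (fun a b : Fin (k-2) => p.lt ((a:ℕ)+1) ((b:ℕ)+1)) a b →
      (fun a : Fin (k-2) => ((a:ℕ)+1) ∉ I) a ∧ (fun a : Fin (k-2) => ((a:ℕ)+1) ∉ I) b :=
    fun a b hab => ⟨WestWilfAux.not_mem_I_left hIp hab, WestWilfAux.not_mem_I_right hIp hab⟩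
  unfold POP.avoiders
  calc Nat.card {π : Equiv.Perm (Fin n) // ¬ p.Occurs π}
      = Nat.card {π : Equiv.Perm (Fin n) //
          ¬ WestWilfAux.OccA (fun a : Fin (k-2) => ((a:ℕ)+1) ∉ I)
            (fun a b : Fin (k-2) => p.lt ((a:ℕ)+1) ((b:ℕ)+1)) π} :=
        Nat.card_congr (Equiv.subtypeEquivRight fun π =>
          not_congr (WestWilfAux.occ_iff_A hIp hbelow hp π))
    _ = Nat.card {π : Equiv.Perm (Fin n) //
          ¬ WestWilfAux.OccB (fun a : Fin (k-2) => ((a:ℕ)+1) ∉ I)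
            (fun a b : Fin (k-2) => p.lt ((a:ℕ)+1) ((b:ℕ)+1)) π} :=
        WestWilfAux.core hRS
    _ = Nat.card {π : Equiv.Perm (Fin n) // ¬ p'.Occurs π} :=
        (Nat.card_congr (Equiv.subtypeEquivRight fun π =>
          not_congr (WestWilfAux.occ_iff_B hIp hIp' hbelow hres hp hp' π))).symm
end
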